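/- arXiv:1402.1979 — 9 statements merged into one kernel-verified Lean document; each statement's English description precedes it below -/
import Mathlib

section
/- For every positive even integer n, the derivative f'(x) of f(x) = x + 1/4 - (x/2 + 1/4)·cos(πx) satisfies f'(n - 1/(π²n)) < 0. -/
noncomputable def f (x : ℝ) : ℝ := x + 1/4 - (x/2 + 1/4) * Real.cos (Real.pi * x)

lemma deriv_f (x : ℝ) : deriv f x =
    1 - (1/2) * Real.cos (Real.pi * x) + Real.pi * (x/2 + 1/4) * Real.sin (Real.pi * x) := by
  have h1 : HasDerivAt (fun y : ℝ => Real.pi * y) Real.pi x := by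
    simpa using (hasDerivAt_id x).const_mul Real.pi
  have hc : HasDerivAt (fun y : ℝ => Real.cos (Real.pi * y))
      (-Real.sin (Real.pi * x) * Real.pi) x :=
    (Real.hasDerivAt_cos (Real.pi * x)).comp x h1
  have h2 : HasDerivAt (fun y : ℝ => y / 2 + 1/4) (1/2) x :=
    ((hasDerivAt_id x).div_const 2).add_const _
  have h3 : HasDerivAt (fun y : ℝ => (y/2 + 1/4) * Real.cos (Real.pi * y))
      ((1/2) * Real.cos (Real.pi * x) + (x/2 + 1/4) * (-Real.sin (Real.pi * x) * Real.pi)) x :=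
    h2.mul hc
  have h4 : HasDerivAt f
      (1 - ((1/2) * Real.cos (Real.pi * x) + (x/2 + 1/4) * (-Real.sin (Real.pi * x) * Real.pi))) x := by
    unfold f
    exact ((hasDerivAt_id x).add_const (1/4 : ℝ)).sub h3
  rw [h4.deriv]; ring

set_option maxHeartbeats 1000000 in
theorem stmt_0 (n : ℕ) (hn : 0 < n) (he : Even n) :
    deriv f ((n : ℝ) - 1 / (Real.pi ^ 2 * n)) < 0 := by
  obtain ⟨m, hm⟩ := he
  have hm1 : 1 ≤ m := by omega
  have hp : (3.14 : ℝ) < Real.pi := by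
    have := Real.pi_gt_d6; linarith
  have hN : (2 : ℝ) ≤ (n : ℝ) := by
    have : 2 ≤ n := by omega
    exact_mod_cast this
  have hNpos : (0 : ℝ) < n := by linarith
  have hppos : (0 : ℝ) < Real.pi := by linarith
  set p := Real.pi with hpdef
  set N := (n : ℝ) with hNdef
  set t : ℝ := 1 / (p * N) with htdef
  have htpos : 0 < t := by positivity
  have htle : t ≤ 1 := by
    rw [htdef, div_le_one (by positivity)]
    nlinarith
  have hsin : t - t ^ 3 / 4 < Real.sin t := by
    have := Real.sin_gt_sub_cube htpos; nlinarith [pow_pos htpos 3]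
  have hcos := Real.one_sub_sq_div_two_le_cos (x := t)
  have hx : p * (N - 1 / (p ^ 2 * N)) = (m : ℤ) * (2 * p) - t := by
    have hN2 : N = 2 * m := by
      rw [hNdef, hm]; push_cast; ring
    rw [htdef, hN2]
    field_simp
    push_cast
    ring
  rw [deriv_f, hx, Real.cos_int_mul_two_pi_sub, Real.sin_int_mul_two_pi_sub]
  -- goal : 1 - 1/2 * cos t + p * ((N - 1/(p^2*N))/2 + 1/4) * (-sin t) < 0
  have hcoef : 0 < p * ((N - 1 / (p ^ 2 * N)) / 2 + 1/4) := by
    have : 1 / (p ^ 2 * N) ≤ 1 := by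
      rw [div_le_one (by positivity)]; nlinarith
    nlinarith
  have hstep : 1 - 1/2 * Real.cos t + p * ((N - 1 / (p ^ 2 * N)) / 2 + 1/4) * (-Real.sin t)
      < 1 - 1/2 * (1 - t ^ 2 / 2) + p * ((N - 1 / (p ^ 2 * N)) / 2 + 1/4) * (-(t - t ^ 3 / 4)) := by
    have h5 : p * ((N - 1 / (p ^ 2 * N)) / 2 + 1/4) * (-Real.sin t)
        < p * ((N - 1 / (p ^ 2 * N)) / 2 + 1/4) * (-(t - t ^ 3 / 4)) := by
      apply mul_lt_mul_of_pos_left (by linarith) hcoef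
    nlinarith [hcos]
  have hfinal : 1 - 1/2 * (1 - t ^ 2 / 2) + p * ((N - 1 / (p ^ 2 * N)) / 2 + 1/4) * (-(t - t ^ 3 / 4)) ≤ 0 := by
    rw [htdef]
    have hpN : (0:ℝ) < p * N := by positivity
    rw [div_pow, div_pow, one_pow, one_pow]
    have expand : 1 - 1/2 * (1 - 1 / (p*N)^2 / 2) + p * ((N - 1 / (p ^ 2 * N)) / 2 + 1/4) * (-(1/(p*N) - 1 / (p*N)^3 / 4))
        = (8*p^4*N^4 + 4*p^2*N^2 - (2*p^2*N^2 + p^2*N - 2)*(4*p^2*N^2 - 1)) / (16 * p^4 * N^4) := by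
      field_simp
      ring
    rw [expand]
    apply div_nonpos_of_nonpos_of_nonneg _ (by positivity)
    have h2p : (9.8:ℝ) ≤ p^2 := by nlinarith
    have k1 : (19.6:ℝ) ≤ p^2*N := by nlinarith
    have k3 : p^2*N ≤ p^2*N^2 := by nlinarith
    have k4 : 78.4*(p^2*N^2) ≤ 4*p^4*N^3 := by
      nlinarith [mul_le_mul_of_nonneg_right k1 (show (0:ℝ) ≤ 4*p^2*N^2 by positivity)]
    have k5 : (0:ℝ) ≤ p^2*N^2 := by positivity
    nlinarith [k1, k3, k4, k5]
  linarith
end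

section
/- For every positive odd integer n, the derivative f'(x) of f(x) = x + 1/4 - (x/2 + 1/4)·cos(πx) satisfies f'(n + 3/(π²n)) < 0. -/
open Real in
lemma f_hasDerivAt (x : ℝ) :
    HasDerivAt f (1 - (1/2) * Real.cos (π * x) + π * (x/2 + 1/4) * Real.sin (π * x)) x := by
  have h1 : HasDerivAt (fun x : ℝ => x + 1/4) 1 x := (hasDerivAt_id x).add_const _
  have hπ : HasDerivAt (fun x : ℝ => π * x) π x := by
    simpa using (hasDerivAt_id x).const_mul π
  have h3 : HasDerivAt (fun x : ℝ => Real.cos (π * x)) (-Real.sin (π * x) * π) x :=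
    (Real.hasDerivAt_cos (π * x)).comp x hπ
  have h2 : HasDerivAt (fun x : ℝ => x/2 + 1/4) (1/2) x := by
    simpa using ((hasDerivAt_id x).div_const 2).add_const (1/4 : ℝ)
  have := h1.sub (h2.mul h3)
  convert this using 1
  · rfl
  · rfl
  · rfl
  · ring

set_option maxHeartbeats 1000000 in
theorem stmt_1 (n : ℕ) (hn : 0 < n) (ho : Odd n) :
    deriv f ((n : ℝ) + 3 / (Real.pi ^ 2 * n)) < 0 := by
  have hπ3 : (3 : ℝ) < Real.pi := Real.pi_gt_three
  have hπ0 : (0 : ℝ) < Real.pi := by linarith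
  have hN1 : (1 : ℝ) ≤ (n : ℝ) := by exact_mod_cast hn
  have hN0 : (0 : ℝ) < (n : ℝ) := by linarith
  set x : ℝ := (n : ℝ) + 3 / (Real.pi ^ 2 * n) with hx
  set t : ℝ := 3 / (Real.pi * n) with htdef
  have ht0 : 0 < t := by positivity
  have hπNt : Real.pi * n * t = 3 := by
    rw [htdef]; field_simp
  have hπt : Real.pi * t ≤ 3 := by
    nlinarith
  have ht1 : t ≤ 1 := by nlinarith
  have hπx : Real.pi * x = Real.pi * n + t := by
    rw [hx, htdef]
    field_simp
  have hxN : (n : ℝ) ≤ x := by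
    have : (0:ℝ) ≤ 3 / (Real.pi ^ 2 * n) := by positivity
    rw [hx]; linarith
  clear_value x t
  obtain ⟨k, hk⟩ := ho
  have hnk : (n : ℝ) = 2 * k + 1 := by exact_mod_cast hk
  have hcos : Real.cos (Real.pi * x) = -Real.cos t := by
    rw [hπx, hnk]
    have : Real.pi * (2 * (k : ℝ) + 1) + t = (t + Real.pi) + (k : ℤ) * (2 * Real.pi) := by
      push_cast; ring
    rw [this, Real.cos_add_int_mul_two_pi, Real.cos_add_pi]
  have hsin : Real.sin (Real.pi * x) = -Real.sin t := by
    rw [hπx, hnk]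
    have : Real.pi * (2 * (k : ℝ) + 1) + t = (t + Real.pi) + (k : ℤ) * (2 * Real.pi) := by
      push_cast; ring
    rw [this, Real.sin_add_int_mul_two_pi, Real.sin_add_pi]
  rw [(f_hasDerivAt x).deriv, hcos, hsin]
  -- goal: 1 - 1/2 * (-cos t) + π * (x/2 + 1/4) * (-sin t) < 0
  have habs : |t| ≤ 1 := by rw [abs_of_pos ht0]; exact ht1
  have hcb := abs_sub_le_iff.1 (Real.cos_bound habs)
  have hsb := abs_sub_le_iff.1 (Real.sin_bound habs)
  rw [abs_of_pos ht0] at hcb hsb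
  have hcle : Real.cos t ≤ 1 - t ^ 2 / 2 + t ^ 4 * (5 / 96) := by linarith [hcb.1]
  have hsge : t - t ^ 3 / 6 - t ^ 4 * (5 / 96) ≤ Real.sin t := by nlinarith [hsb.2, mul_le_mul_of_nonneg_left ht1 (pow_pos ht0 4).le]
  have hsin0 : 0 < Real.sin t := by nlinarith
  have ht3 : t^3 ≤ t := by nlinarith
  have ht4 : t^4 ≤ t := by nlinarith
  have key : 1 + (1/2) * Real.cos t < Real.pi * (x/2 + 1/4) * Real.sin t := by
    have h1 : Real.pi * ((n:ℝ)/2 + 1/4) * Real.sin t ≤ Real.pi * (x/2 + 1/4) * Real.sin t := by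
      have hm : Real.pi * ((n:ℝ)/2 + 1/4) ≤ Real.pi * (x/2 + 1/4) := by
        apply mul_le_mul_of_nonneg_left _ hπ0.le
        linarith
      exact mul_le_mul_of_nonneg_right hm hsin0.le
    have h2 : 1 + (1/2) * Real.cos t < Real.pi * ((n:ℝ)/2 + 1/4) * Real.sin t := by
      have h3 : Real.pi * ((n:ℝ)/2 + 1/4) * (t - t ^ 3 / 6 - t ^ 4 * (5/96))
          ≤ Real.pi * ((n:ℝ)/2 + 1/4) * Real.sin t := by
        apply mul_le_mul_of_nonneg_left hsge
        positivity
      have h4 : 1 + (1/2) * Real.cos t ≤ 3/2 - t^2/4 + t^4 * (5/192) := by linarith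
      have key2 : Real.pi * ((n:ℝ)/2 + 1/4) = 3/(2*t) + Real.pi/4 := by
        have hπN : Real.pi * n = 3 / t := (eq_div_iff ht0.ne').mpr hπNt
        have : Real.pi * ((n:ℝ)/2 + 1/4) = (Real.pi * n)/2 + Real.pi/4 := by ring
        rw [this, hπN]; ring
      have hr2 : (3/(2*t)) * (t - t^3/6 - t^4*(5/96)) = 3/2 - t^2/4 - (5/64)*t^3 := by
        field_simp
        ring
      have hE : 75/96 * t ≤ t - t^3/6 - t^4*(5/96) := by linarith
      have hπE : 3 * (75/96 * t) < Real.pi * (t - t^3/6 - t^4*(5/96)) :=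
        calc 3 * (75/96 * t) < Real.pi * (75/96 * t) := by nlinarith
          _ ≤ Real.pi * (t - t^3/6 - t^4*(5/96)) :=
            mul_le_mul_of_nonneg_left hE hπ0.le
      have expand : Real.pi * ((n:ℝ)/2 + 1/4) * (t - t ^ 3 / 6 - t ^ 4 * (5/96))
          = 3/2 - t^2/4 - (5/64)*t^3 + Real.pi * (t - t^3/6 - t^4*(5/96)) / 4 := by
        rw [key2]; rw [add_mul, hr2]; ring
      rw [expand] at h3
      linarith
    linarith
  nlinarith [key]
end

section
/- For every positive even integer n, the function f has a critical point c_n in the open interval (n - 1/(π²n), n), i.e., there exists c with n - 1/(π²n) < c < n and f'(c) = 0. -/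
noncomputable def g (x : ℝ) : ℝ :=
  1 - Real.cos (Real.pi * x) / 2 + Real.pi * (x / 2 + 1 / 4) * Real.sin (Real.pi * x)

lemma f_hasDerivAt_s3 (x : ℝ) : HasDerivAt f (g x) x := by
  have h1 : HasDerivAt (fun x : ℝ => Real.pi * x) Real.pi x := by
    simpa using (hasDerivAt_id x).const_mul Real.pi
  have hcos := h1.cos
  have h2 : HasDerivAt (fun x : ℝ => x / 2 + 1 / 4) (1 / 2) x :=
    ((hasDerivAt_id x).div_const 2).add_const (1 / 4)
  have h3 := ((hasDerivAt_id x).add_const (1 / 4 : ℝ)).sub (h2.mul hcos)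
  exact h3.congr_deriv (by unfold g; ring)

lemma deriv_f_s3 (x : ℝ) : deriv f x = g x := (f_hasDerivAt_s3 x).deriv

lemma g_cont : Continuous g := by unfold g; fun_prop

set_option maxHeartbeats 1000000 in
theorem stmt_3 (n : ℕ) (hn : 0 < n) (he : Even n) :
    ∃ c : ℝ, (n : ℝ) - 1 / (Real.pi ^ 2 * n) < c ∧ c < (n : ℝ) ∧ deriv f c = 0 := by
  have hπ : (3 : ℝ) < Real.pi := Real.pi_gt_three
  have hπ0 : (0 : ℝ) < Real.pi := by linarith
  have hn2 : 2 ≤ n := by obtain ⟨k, hk⟩ := he; omega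
  set N : ℝ := (n : ℝ) with hNdef
  have hN : (2 : ℝ) ≤ N := by rw [hNdef]; exact_mod_cast hn2
  set ε : ℝ := 1 / (Real.pi ^ 2 * N) with hεdef
  have hε0 : 0 < ε := by positivity
  set a : ℝ := N - ε with hadef
  have hab : a < N := by rw [hadef]; linarith
  -- trig values at N
  obtain ⟨k, hk⟩ := he
  have hcosN : Real.cos (Real.pi * N) = 1 := by
    have h : Real.pi * N = (k : ℝ) * (2 * Real.pi) := by
      rw [hNdef, hk]; push_cast; ring
    rw [h, Real.cos_nat_mul_two_pi]
  have hsinN : Real.sin (Real.pi * N) = 0 := by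
    have h : Real.pi * N = (n : ℝ) * Real.pi := by rw [hNdef]; ring
    rw [h, Real.sin_nat_mul_pi]
  have hgN : g N = 1 / 2 := by
    unfold g; rw [hcosN, hsinN]; ring
  -- the small angle
  set t : ℝ := Real.pi * ε with htdef
  have ht0 : 0 < t := by positivity
  have hNt : Real.pi * N * t = 1 := by
    rw [htdef, hεdef]; field_simp
  have hπN : (6 : ℝ) < Real.pi * N := by nlinarith
  have ht6 : t < 1 / 6 := by
    nlinarith [mul_pos (show (0:ℝ) < Real.pi * N - 6 by linarith) ht0]
  have hεt : Real.pi * ε = t := htdef.symm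
  have hεsm : ε < 1 / 6 := by nlinarith
  have hcos_lb : 1 - t ^ 2 / 2 ≤ Real.cos t := Real.one_sub_sq_div_two_le_cos
  have hsin_lb : t - t ^ 3 / 4 < Real.sin t := by
    have := Real.sin_gt_sub_cube ht0; nlinarith [pow_pos ht0 3]
  -- g a < 0
  have hcosa : Real.cos (Real.pi * a) = Real.cos t := by
    have h : Real.pi * a = Real.pi * N - t := by rw [hadef, htdef]; ring
    rw [h, Real.cos_sub, hcosN, hsinN]; ring
  have hsina : Real.sin (Real.pi * a) = -Real.sin t := by
    have h : Real.pi * a = Real.pi * N - t := by rw [hadef, htdef]; ring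
    rw [h, Real.sin_sub, hcosN, hsinN]; ring
  have hga : g a < 0 := by
    unfold g
    rw [hcosa, hsina]
    have ha0 : 0 < a := by rw [hadef]; linarith
    have hfac : 0 < Real.pi * (a / 2 + 1 / 4) := by positivity
    have h5 : Real.pi * (a / 2 + 1 / 4) * (t - t ^ 3 / 4)
        < Real.pi * (a / 2 + 1 / 4) * Real.sin t :=
      mul_lt_mul_of_pos_left hsin_lb hfac
    have key : 1 / 2 + t ^ 2 / 4 ≤ Real.pi * (a / 2 + 1 / 4) * (t - t ^ 3 / 4) := by
      have hexp : Real.pi * (a / 2 + 1 / 4) * (t - t ^ 3 / 4)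
          = ((1 - t ^ 2) / 2 + Real.pi * t / 4) * (1 - t ^ 2 / 4) := by
        rw [hadef]
        linear_combination ((1 - t ^ 2 / 4) / 2) * hNt - ((1 - t ^ 2 / 4) * t / 2) * hεt
      rw [hexp]
      have h4t : (0:ℝ) < 4 - t ^ 2 := by nlinarith
      nlinarith [mul_pos (show (0:ℝ) < Real.pi - 3 by linarith) (mul_pos ht0 h4t),
        mul_pos ht0 (show (0:ℝ) < 1 / 6 - t by linarith),
        mul_pos (mul_pos ht0 ht0) (show (0:ℝ) < 1 / 6 - t by linarith),
        mul_pos (mul_pos ht0 ht0) ht0]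
    have hneg : Real.pi * (a / 2 + 1 / 4) * -Real.sin t
        = -(Real.pi * (a / 2 + 1 / 4) * Real.sin t) := by ring
    rw [hneg]
    linarith [hcos_lb, h5, key]
  -- IVT
  have hsub := intermediate_value_Ioo (a := a) (b := N) hab.le g_cont.continuousOn
  have h0 : (0 : ℝ) ∈ Set.Ioo (g a) (g N) := by
    rw [hgN]; exact ⟨hga, by norm_num⟩
  obtain ⟨c, hc, hgc⟩ := hsub h0
  refine ⟨c, ?_, hc.2, by rw [deriv_f_s3]; exact hgc⟩
  have := hc.1
  rw [hadef, hεdef, hNdef] at this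
  exact this
end

section
/- For every positive even integer n, f maps the interval J_n = [n, n + 7/(2π²n)] into J_{n/2} = [n/2, n/2 + 7/(2π²(n/2))], i.e., f(J_n) ⊆ J_{f(n)}. -/
theorem stmt_6 (n : ℕ) (hn : 0 < n) (he : Even n) :
    Set.MapsTo f (Set.Icc (n : ℝ) ((n : ℝ) + 7 / (2 * Real.pi ^ 2 * n)))
      (Set.Icc ((n : ℝ) / 2) ((n : ℝ) / 2 + 7 / (2 * Real.pi ^ 2 * ((n : ℝ) / 2)))) := by
  obtain ⟨k, hk⟩ := he
  intro x hx
  obtain ⟨hx1, hx2⟩ := hx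
  have hπ : (3:ℝ) < Real.pi := Real.pi_gt_three
  have hπ2 : Real.pi < 3.15 := by linarith [Real.pi_lt_d2]
  have hk1 : 1 ≤ k := by omega
  have hn2 : (2:ℝ) ≤ n := by
    have : 2 ≤ n := by omega
    exact_mod_cast this
  have hnpos : (0:ℝ) < n := by linarith
  have hden : (0:ℝ) < Real.pi ^ 2 * n := by positivity
  obtain ⟨t, ht0, hxe⟩ : ∃ t, 0 ≤ t ∧ x = (n:ℝ) + t := ⟨x - n, by linarith, by ring⟩
  have ht1 : t * (Real.pi ^ 2 * n) ≤ 7/2 := by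
    have h : t ≤ 7 / (2 * Real.pi ^ 2 * n) := by linarith
    have h2 : (0:ℝ) < 2 * Real.pi ^ 2 * n := by positivity
    rw [le_div_iff₀ h2] at h
    ring_nf at h ⊢
    linarith
  have hc : Real.cos (Real.pi * x) = Real.cos (Real.pi * t) := by
    have harg : Real.pi * x = Real.pi * t + (k : ℤ) * (2 * Real.pi) := by
      rw [hxe, hk]
      push_cast
      ring
    rw [harg, Real.cos_add_int_mul_two_pi]
  have hc1 : Real.cos (Real.pi * t) ≤ 1 := Real.cos_le_one _
  have hc2 : 1 - (Real.pi * t) ^ 2 / 2 ≤ Real.cos (Real.pi * t) :=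
    Real.one_sub_sq_div_two_le_cos
  have ht36 : t ≤ 7/36 := by nlinarith
  constructor
  · have hpos : (0:ℝ) ≤ x/2 + 1/4 := by rw [hxe]; linarith
    have := mul_nonneg hpos (by linarith : (0:ℝ) ≤ 1 - Real.cos (Real.pi * t))
    simp only [f, hc]
    nlinarith
  · have hrw : 2 * Real.pi ^ 2 * ((n:ℝ)/2) = Real.pi ^ 2 * n := by ring
    rw [hrw]
    have ha0 : (0:ℝ) ≤ t * (Real.pi ^ 2 * n) := mul_nonneg ht0 hden.le
    have key : (f x - (n:ℝ)/2) * (Real.pi ^ 2 * n) ≤ 7 := by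
      simp only [f]
      rw [hc, hxe]
      have h1 : (1 - Real.cos (Real.pi * t)) ≤ Real.pi ^ 2 * t ^ 2 / 2 := by nlinarith
      have hcoef : (0:ℝ) ≤ ((n:ℝ) + t)/2 + 1/4 := by linarith
      have hsq : (t * (Real.pi ^ 2 * n)) ^ 2 ≤ (7/2) ^ 2 := by
        nlinarith [mul_nonneg (sub_nonneg.mpr ht1) (by linarith [mul_nonneg ht0 hden.le] : (0:ℝ) ≤ 7/2 + t * (Real.pi ^ 2 * n))]
      have hA : ((n:ℝ) + t)/2 + 1/4 ≤ 6 * n / 7 := by linarith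
      nlinarith [mul_le_mul_of_nonneg_right (mul_le_mul_of_nonneg_left h1 hcoef) hden.le,
        mul_nonneg (sub_nonneg.mpr hA)
          (by positivity : (0:ℝ) ≤ Real.pi ^ 2 * t ^ 2 / 2 * (Real.pi ^ 2 * n)),
        hsq, ht1]
    have h2 : f x - (n:ℝ)/2 ≤ 7 / (Real.pi ^ 2 * n) := (le_div_iff₀ hden).mpr key
    linarith
end

section
/- For every positive odd integer n, f maps the interval J_n = [n, n + 7/(2π²n)] into J_{(3n+1)/2} = [(3n+1)/2, (3n+1)/2 + 7/(π²(3n+1))], i.e., f(J_n) ⊆ J_{f(n)}. -/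
open Real

lemma cosLB1 (θ : ℝ) (h0 : 0 ≤ θ) (h2 : θ ≤ 2) :
    1 - θ^2/2 + θ^4/32 ≤ Real.cos θ := by
  have h := Real.one_sub_sq_div_two_le_cos (x := θ/2)
  have hnn : (0:ℝ) ≤ 1 - (θ/2)^2/2 := by nlinarith
  have hd : Real.cos θ = 2 * Real.cos (θ/2)^2 - 1 := by
    have := Real.cos_two_mul (θ/2); rw [← this]; ring_nf
  nlinarith [sq_nonneg (Real.cos (θ/2) - (1 - (θ/2)^2/2))]

lemma cosLB2 (θ : ℝ) (h0 : 0 ≤ θ) (h2 : θ ≤ 2) :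
    1 - θ^2/2 + 5*θ^4/128 - θ^6/1024 ≤ Real.cos θ := by
  have h := cosLB1 (θ/2) (by linarith) (by linarith)
  have hnn : (0:ℝ) ≤ 1 - (θ/2)^2/2 + (θ/2)^4/32 := by nlinarith
  have hd : Real.cos θ = 2 * Real.cos (θ/2)^2 - 1 := by
    have := Real.cos_two_mul (θ/2); rw [← this]; ring_nf
  nlinarith [sq_nonneg (Real.cos (θ/2) - (1 - (θ/2)^2/2 + (θ/2)^4/32)), sq_nonneg θ, sq_nonneg (θ^2), sq_nonneg (θ^3)]

lemma cosUB1 (u : ℝ) (h0 : 0 ≤ u) (h2 : u ≤ 1) :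
    Real.cos u ≤ 1 - u^2/2 + u^4/16 := by
  rcases eq_or_lt_of_le h0 with h|h
  · rw [← h]; norm_num
  have hs : u/2 - (u/2)^3/4 < Real.sin (u/2) := by
    have := Real.sin_gt_sub_cube (x := u/2) (by linarith); nlinarith [pow_pos (by linarith : (0:ℝ) < u/2) 3]
  have hB : (0:ℝ) ≤ u/2 - (u/2)^3/4 := by nlinarith [sq_nonneg u, mul_nonneg h0 (sq_nonneg u)]
  have hd : Real.cos u = 1 - 2 * Real.sin (u/2)^2 := by
    nlinarith [Real.sin_sq_add_cos_sq (u/2),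
      (by rw [← Real.cos_two_mul]; ring_nf : Real.cos u = 2 * Real.cos (u/2)^2 - 1)]
  nlinarith [sq_nonneg (Real.sin (u/2) - (u/2 - (u/2)^3/4)), sq_nonneg u, sq_nonneg (u^2)]

lemma cosUB2 (θ : ℝ) (h0 : 0 ≤ θ) (h2 : θ ≤ 2) :
    Real.cos θ ≤ 1 - θ^2/2 + 3*θ^4/64 := by
  have h := cosUB1 (θ/2) (by linarith) (by linarith)
  have hcn : (0:ℝ) ≤ Real.cos (θ/2) := by
    have := Real.one_sub_sq_div_two_le_cos (x := θ/2); nlinarith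
  have hUnn : (0:ℝ) ≤ 1 - (θ/2)^2/2 + (θ/2)^4/16 := by nlinarith
  have hd : Real.cos θ = 2 * Real.cos (θ/2)^2 - 1 := by
    have := Real.cos_two_mul (θ/2); rw [← this]; ring_nf
  nlinarith [mul_self_le_mul_self hcn h,
    mul_nonneg (pow_nonneg h0 6) (by nlinarith : (0:ℝ) ≤ 64 - θ^2)]

lemma L_theta2 (θ u : ℝ) (h : θ^2 = u) (hu : u ≤ 5/4) (h0 : 0 ≤ θ) : θ ≤ 2 := by
  nlinarith

lemma L_cube (u c : ℝ) (hu0 : 0 ≤ u) (hu : u ≤ 5/4)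
    (h : 1 - c ≤ u/2 - 5*u^2/128 + u^3/1024) : 1 - c ≤ u/2 - (155/4096)*u^2 := by
  nlinarith [sq_nonneg u]

lemma L_box (a t : ℝ) (ha0 : 0 ≤ a) (ht0 : 0 ≤ t) (ha35 : a ≤ 7/2) (ht35 : t ≤ 0.3547) :
    (3/4 + t/2) * (a/2 - (155/4096)*a^2*t) ≤ 3/2 := by
  nlinarith [mul_nonneg ht0 (sub_nonneg.mpr ha35), mul_nonneg ha0 (sub_nonneg.mpr ht35),
    mul_nonneg (sub_nonneg.mpr ha35) (sub_nonneg.mpr ht35),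
    mul_nonneg (mul_nonneg ha0 ha0) (sub_nonneg.mpr ht35),
    mul_nonneg (mul_nonneg ha0 ht0) (sub_nonneg.mpr ha35),
    mul_nonneg (mul_nonneg ha0 ht0) (sub_nonneg.mpr ht35)]

lemma L_Ka (n a t : ℝ) (hn3 : 3 ≤ n) (ha0 : 0 ≤ a) (ht0 : 0 ≤ t)
    (hna : 2*n*a ≤ 7) (hta : 9.8696*t ≤ a) : (n/2 + t/2 + 1/4) * a ≤ 3 := by
  have ha76 : a ≤ 7/6 := by nlinarith [mul_nonneg (by linarith : (0:ℝ) ≤ n - 3) ha0]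
  have h2 : a^2 - 9.8696*(a*t) ≥ 0 := by nlinarith [mul_nonneg ha0 (by linarith : (0:ℝ) ≤ a - 9.8696*t)]
  have hat : a*t ≤ 7/50 := by nlinarith
  nlinarith [mul_nonneg ht0 ha0]

lemma L_upoly (n a t : ℝ) (hn1 : 1 ≤ n) (ha0 : 0 ≤ a) (ht0 : 0 ≤ t)
    (hna : 2*n*a ≤ 7) (hta : 9.8696*t ≤ a) :
    ((3/2)*a - ((2*n+1)/4)*(a^2/2 - (3/64)*a^3*t))*(3*n+1) ≤ 7 := by
  have hq : 4*n^2*a^4 ≤ 49*a^2 := by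
    nlinarith [mul_nonneg (mul_nonneg (sq_nonneg a) (by linarith : (0:ℝ) ≤ 7 - 2*n*a))
      (by nlinarith : (0:ℝ) ≤ 7 + 2*n*a)]
  have hC : (0:ℝ) < (2*n+1)*(3*n+1)*(5000*n^2 - 588) := by nlinarith
  have hd : (60000*n^2*(3*n+1))^2 ≤
      4*(280000*n^2)*((2*n+1)*(3*n+1)*(5000*n^2 - 588)) := by
    nlinarith [sq_nonneg n, mul_nonneg (by linarith : (0:ℝ) ≤ n - 1) (sq_nonneg n),
      mul_nonneg (mul_nonneg (by linarith : (0:ℝ) ≤ n - 1) (by linarith : (0:ℝ) ≤ n - 1)) (sq_nonneg n)]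
  have quad : 60000*n^2*(3*n+1)*a - ((2*n+1)*(3*n+1)*(5000*n^2 - 588))*a^2 ≤ 280000*n^2 := by
    nlinarith [sq_nonneg (2*((2*n+1)*(3*n+1)*(5000*n^2 - 588))*a - 60000*n^2*(3*n+1)), hC, hd]
  have h5 : 0 ≤ 12*(2*n+1)*(3*n+1)*(49*a^2 - 4*n^2*a^4) := by
    have h0 : (0:ℝ) ≤ 12*(2*n+1)*(3*n+1) := by nlinarith
    nlinarith [mul_nonneg h0 (by linarith : (0:ℝ) ≤ 49*a^2 - 4*n^2*a^4)]
  have h6 : 0 ≤ (3*n+1)*(2*n+1)*(40000*n^2)*((3/2500)*a^4 - (3/256)*a^3*t) := by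
    have hc : (0:ℝ) ≤ (3*n+1)*(2*n+1)*(40000*n^2) := by positivity
    have h7 : (3/256)*(a^3*t) ≤ (3/2500)*a^4 := by
      nlinarith [mul_nonneg (mul_nonneg (mul_nonneg ha0 ha0) ha0) (by linarith : (0:ℝ) ≤ a - 9.8696*t), pow_nonneg ha0 4]
    nlinarith [mul_nonneg hc (by linarith : (0:ℝ) ≤ (3/2500)*a^4 - (3/256)*a^3*t)]
  have h40 : (0:ℝ) < 40000*n^2 := by positivity
  rw [← mul_le_mul_iff_right₀ h40]
  nlinarith [quad, h5, h6]

set_option maxHeartbeats 1000000 in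
theorem stmt_7 (n : ℕ) (hn : 0 < n) (ho : Odd n) :
    Set.MapsTo f (Set.Icc (n : ℝ) ((n : ℝ) + 7 / (2 * Real.pi ^ 2 * n)))
      (Set.Icc ((3 * (n : ℝ) + 1) / 2)
        ((3 * (n : ℝ) + 1) / 2 + 7 / (Real.pi ^ 2 * (3 * (n : ℝ) + 1)))) := by
  obtain ⟨k, hk⟩ := ho
  intro x hx
  obtain ⟨hx1, hx2⟩ := hx
  have hπ : (0:ℝ) < π := Real.pi_pos
  have hπ2l : (9.8696:ℝ) < π^2 := by nlinarith [Real.pi_gt_d6]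
  have hn1 : (1:ℝ) ≤ (n:ℝ) := by exact_mod_cast hn
  set t : ℝ := x - n with htdef
  have ht0 : 0 ≤ t := by simp only [htdef]; linarith
  clear_value t
  set a : ℝ := π^2 * t with hadef
  have ha0 : 0 ≤ a := by positivity
  have hna : 2*(n:ℝ)*a ≤ 7 := by
    have hpos : (0:ℝ) < 2*π^2*(n:ℝ) := by positivity
    have h7 : t ≤ 7 / (2*π^2*(n:ℝ)) := by simp only [htdef]; linarith
    have h8 := (le_div_iff₀ hpos).mp h7
    rw [hadef]; linarith [h8]
  clear hx1 hx2
  have hta : 9.8696 * t ≤ a := by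
    rw [hadef]; nlinarith [mul_nonneg ht0 (by linarith : (0:ℝ) ≤ π^2 - 9.8696)]
  have hat : a * t ≤ 5/4 := by
    have h1 : a ≤ 7/2 := by nlinarith [mul_nonneg (by linarith : (0:ℝ) ≤ (n:ℝ)-1) ha0]
    nlinarith [mul_nonneg ha0 (by linarith : (0:ℝ) ≤ a - 9.8696*t),
      mul_nonneg (by linarith : (0:ℝ) ≤ 7/2 - a) (by linarith : (0:ℝ) ≤ 7/2 + a)]
  clear_value a
  have hθ0 : 0 ≤ π * t := by positivity
  have hθsq : (π*t)^2 = a*t := by rw [hadef]; ring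
  have hθ2 : π * t ≤ 2 := L_theta2 _ _ hθsq hat hθ0
  have hcos : Real.cos (π * x) = - Real.cos (π * t) := by
    have hx' : π * x = π * t + π + (k:ℝ) * (2*π) := by
      have hcast : (n:ℝ) = 2*(k:ℝ)+1 := by exact_mod_cast hk
      rw [htdef]; linear_combination π * hcast
    rw [hx', Real.cos_add_nat_mul_two_pi, Real.cos_add_pi]
  set c : ℝ := Real.cos (π * t) with hcdef
  clear_value c
  have hc1 : c ≤ 1 := by rw [hcdef]; exact Real.cos_le_one _
  set K : ℝ := (n:ℝ)/2 + t/2 + 1/4 with hKdef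
  clear_value K
  have hKpos : (2*(n:ℝ)+1)/4 ≤ K := by rw [hKdef]; linarith
  have hfx : f x = (3*(n:ℝ)+1)/2 + ((3/2)*t - K*(1-c)) := by
    rw [f, hcos, hKdef, htdef]; push_cast; ring
  have hlow : K*(1-c) ≤ (3/2)*t := by
    rcases eq_or_lt_of_le hn1 with h1|h3
    · have hn1' : (n:ℝ) = 1 := h1.symm
      have h1c : 1 - c ≤ t*(a/2 - (155/4096)*a^2*t) := by
        have hb := cosLB2 (π*t) hθ0 hθ2
        have hb2 : 1 - c ≤ (a*t)/2 - 5*(a*t)^2/128 + (a*t)^3/1024 := by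
          rw [hcdef]
          calc 1 - Real.cos (π*t) ≤ (π*t)^2/2 - 5*(π*t)^4/128 + (π*t)^6/1024 := by linarith
            _ = (a*t)/2 - 5*(a*t)^2/128 + (a*t)^3/1024 := by
                rw [show (π*t)^4 = ((π*t)^2)^2 by ring, show (π*t)^6 = ((π*t)^2)^3 by ring, hθsq]
        have := L_cube (a*t) c (mul_nonneg ha0 ht0) hat hb2
        calc 1 - c ≤ (a*t)/2 - (155/4096)*(a*t)^2 := this
          _ = t*(a/2 - (155/4096)*a^2*t) := by ring
      have ha35 : a ≤ 7/2 := by rw [hn1'] at hna; linarith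
      have ht35 : t ≤ 0.3547 := by nlinarith
      have hbox := L_box a t ha0 ht0 ha35 ht35
      have hK1 : K = 3/4 + t/2 := by rw [hKdef, hn1']; ring
      calc K*(1-c) ≤ K * (t*(a/2 - (155/4096)*a^2*t)) := by
            apply mul_le_mul_of_nonneg_left h1c; rw [hK1]; linarith
        _ = t * ((3/4 + t/2) * (a/2 - (155/4096)*a^2*t)) := by rw [hK1]; ring
        _ ≤ t * (3/2) := mul_le_mul_of_nonneg_left hbox ht0
        _ = (3/2)*t := by ring
    · have hn3 : (3:ℝ) ≤ (n:ℝ) := by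
        have h2n : 2 ≤ n := by exact_mod_cast h3
        have h3n : 3 ≤ n := by omega
        exact_mod_cast h3n
      have h1c : 1 - c ≤ a*t/2 := by
        have hb := Real.one_sub_sq_div_two_le_cos (x := π*t)
        rw [hcdef]; nlinarith [hθsq]
      have hKa := L_Ka (n:ℝ) a t hn3 ha0 ht0 hna hta
      calc K*(1-c) ≤ K * (a*t/2) := by
            apply mul_le_mul_of_nonneg_left h1c; rw [hKdef]; linarith
        _ = ((n/2 + t/2 + 1/4)*a) * (t/2) := by rw [hKdef]; ring
        _ ≤ 3 * (t/2) := mul_le_mul_of_nonneg_right hKa (by linarith)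
        _ = (3/2)*t := by ring
  have hup : (3/2)*t - K*(1-c) ≤ 7/(π^2*(3*(n:ℝ)+1)) := by
    have hE : a*t/2 - (3/64)*a^2*t^2 ≤ 1 - c := by
      have hb := cosUB2 (π*t) hθ0 hθ2
      have e4 : (π*t)^4 = (a*t)^2 := by rw [show (π*t)^4 = ((π*t)^2)^2 by ring, hθsq]
      rw [hcdef]
      calc a*t/2 - (3/64)*a^2*t^2 = (π*t)^2/2 - (3/64)*(π*t)^4 := by rw [hθsq, e4]; ring
        _ ≤ 1 - Real.cos (π*t) := by linarith
    have hE0 : 0 ≤ a*t/2 - (3/64)*a^2*t^2 := by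
      nlinarith [mul_nonneg (mul_nonneg ha0 ht0) (by linarith : (0:ℝ) ≤ 5/4 - a*t)]
    have hKE : ((2*(n:ℝ)+1)/4) * (a*t/2 - (3/64)*a^2*t^2) ≤ K*(1-c) := by
      have h1 := mul_le_mul_of_nonneg_right hKpos hE0
      have h2 : K * (a*t/2 - (3/64)*a^2*t^2) ≤ K * (1-c) := by
        apply mul_le_mul_of_nonneg_left hE; rw [hKdef]; linarith
      linarith
    have hpoly := L_upoly (n:ℝ) a t hn1 ha0 ht0 hna hta
    have hpos2 : (0:ℝ) < π^2*(3*(n:ℝ)+1) := by positivity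
    rw [le_div_iff₀ hpos2]
    calc ((3/2)*t - K*(1-c))*(π^2*(3*(n:ℝ)+1))
        ≤ ((3/2)*t - ((2*(n:ℝ)+1)/4)*(a*t/2 - (3/64)*a^2*t^2))*(π^2*(3*(n:ℝ)+1)) := by
          apply mul_le_mul_of_nonneg_right _ (le_of_lt hpos2); linarith
      _ = ((3/2)*a - ((2*(n:ℝ)+1)/4)*(a^2/2 - (3/64)*a^3*t))*(3*(n:ℝ)+1) := by
          rw [hadef]; ring
      _ ≤ 7 := hpoly
  constructor
  · rw [hfx]; linarith
  · rw [hfx]; linarith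
end

section
/- If every positive integer n has the property that f(J_n) ⊆ J_{T(n)} where J_m = [m, m + 7/(2π²m)], and if there exists a positive integer n₀ with limsup_{k→∞} f^k(n₀) = ∞, then the set U = {x ∈ ℝ⁺ : limsup_{k→∞} f^k(x) = ∞} contains a nonempty open interval. -/
def T (n : ℕ) : ℕ := if Odd n then (3 * n + 1) / 2 else n / 2

noncomputable def J (m : ℕ) : Set ℝ := Set.Icc (m : ℝ) ((m : ℝ) + 7 / (2 * Real.pi ^ 2 * m))

lemma T_pos {n : ℕ} (hn : 0 < n) : 0 < T n := by
  unfold T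
  split
  · omega
  · rename_i h
    rw [Nat.not_odd_iff_even] at h
    obtain ⟨m, rfl⟩ := h
    omega

theorem stmt_8
    (hJ : ∀ n : ℕ, 0 < n → Set.MapsTo f (J n) (J (T n)))
    (hdiv : ∃ n₀ : ℕ, 0 < n₀ ∧ ∀ C : ℝ, ∃ᶠ k in Filter.atTop, C < f^[k] (n₀ : ℝ)) :
    ∃ a b : ℝ, a < b ∧
      Set.Ioo a b ⊆ {x : ℝ | 0 < x ∧ ∀ C : ℝ, ∃ᶠ k in Filter.atTop, C < f^[k] x} := by
  obtain ⟨n₀, hn₀, hd⟩ := hdiv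
  have hpi := Real.pi_pos
  have hn₀R : (1:ℝ) ≤ (n₀:ℝ) := by exact_mod_cast hn₀
  have heps : (0:ℝ) < 7 / (2 * Real.pi ^ 2 * n₀) := by positivity
  refine ⟨(n₀:ℝ), (n₀:ℝ) + 7 / (2 * Real.pi ^ 2 * n₀), by linarith, ?_⟩
  intro x hx
  have hxJ : x ∈ J n₀ := ⟨le_of_lt hx.1, le_of_lt hx.2⟩
  have hnJ : (n₀:ℝ) ∈ J n₀ := ⟨le_refl _, by linarith⟩
  have key : ∀ k, 0 < T^[k] n₀ ∧ f^[k] x ∈ J (T^[k] n₀) ∧ f^[k] (n₀:ℝ) ∈ J (T^[k] n₀) := by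
    intro k
    induction k with
    | zero => exact ⟨hn₀, hxJ, hnJ⟩
    | succ k ih =>
      obtain ⟨h1, h2, h3⟩ := ih
      rw [Function.iterate_succ_apply', Function.iterate_succ_apply',
        Function.iterate_succ_apply']
      exact ⟨T_pos h1, hJ _ h1 h2, hJ _ h1 h3⟩
  refine ⟨by linarith [hx.1], fun C => ?_⟩
  refine (hd (C + 1)).mono fun k hk => ?_
  obtain ⟨h1, h2, h3⟩ := key k
  set m := T^[k] n₀ with hm
  have hmR : (1:ℝ) ≤ (m:ℝ) := by exact_mod_cast h1
  have hπ3 : (3:ℝ) < Real.pi := Real.pi_gt_three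
  have hden : (0:ℝ) < 2 * Real.pi ^ 2 * m := by positivity
  have hsmall : 7 / (2 * Real.pi ^ 2 * (m:ℝ)) ≤ 1 := by
    rw [div_le_one hden]
    nlinarith
  have := h3.2
  have := h2.1
  linarith
end

section
/- The geometric mean of g(t) = 1 - cos(πt)/2 over the interval [0,2] equals (2+√3)/4; that is, exp((1/2)·∫₀² ln(1 - cos(πt)/2) dt) = (2+√3)/4. -/
open Complex Metric intervalIntegral

noncomputable def rr : ℝ := 2 - Real.sqrt 3

lemma sqrt3_sq : Real.sqrt 3 ^ 2 = 3 := Real.sq_sqrt (by norm_num)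

lemma rr_pos : 0 < rr := by
  have := sqrt3_sq; have := Real.sqrt_nonneg 3; unfold rr; nlinarith

lemma rr_lt_one : rr < 1 := by
  have := sqrt3_sq; have := Real.sqrt_nonneg 3; unfold rr; nlinarith

lemma rr_sq : rr ^ 2 + 1 = 4 * rr := by
  have := sqrt3_sq; unfold rr; ring_nf; nlinarith

lemma mem_slit (z : ℂ) (hz : ‖z‖ ≤ 1) : (1 - (rr:ℂ) * z) ∈ Complex.slitPlane := by
  left
  have hre : |z.re| ≤ 1 := le_trans (Complex.abs_re_le_norm z) hz
  have h1 : z.re ≤ 1 := le_trans (le_abs_self _) hre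
  have := rr_pos; have := rr_lt_one
  simp only [Complex.sub_re, Complex.one_re, Complex.mul_re, Complex.ofReal_re,
    Complex.ofReal_im, zero_mul, sub_zero]
  nlinarith

lemma key0 : (∫ θ in (0:ℝ)..(2*Real.pi), Complex.log (1 - (rr:ℂ) * circleMap 0 1 θ)) = 0 := by
  have hd : DiffContOnCl ℂ (fun z => Complex.log (1 - (rr:ℂ) * z)) (ball (0:ℂ) 1) := by
    apply DifferentiableOn.diffContOnCl
    rw [closure_ball (0:ℂ) one_ne_zero]
    intro z hz
    apply DifferentiableAt.differentiableWithinAt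
    apply DifferentiableAt.clog
    · fun_prop
    · exact mem_slit z (by simpa [Complex.dist_eq] using mem_closedBall.mp hz)
  have := hd.circleIntegral_sub_inv_smul (w := 0) (by simp)
  simp only [Complex.log_one, smul_zero, mul_zero, Complex.ofReal_zero, sub_zero] at this
  rw [circleIntegral] at this
  simp only [deriv_circleMap, smul_eq_mul] at this
  have heq : ∀ θ : ℝ, circleMap 0 1 θ * I * ((circleMap 0 1 θ)⁻¹ *
      Complex.log (1 - (rr:ℂ) * circleMap 0 1 θ)) =
      I * Complex.log (1 - (rr:ℂ) * circleMap 0 1 θ) := by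
    intro θ
    have h0 : circleMap 0 1 θ ≠ 0 := circleMap_ne_center one_ne_zero
    field_simp
  rw [intervalIntegral.integral_congr (fun θ _ => heq θ)] at this
  rw [intervalIntegral.integral_const_mul] at this
  rcases mul_eq_zero.mp this with h | h
  · exact absurd h I_ne_zero
  · exact h

lemma cont_log : Continuous fun θ : ℝ => Complex.log (1 - (rr:ℂ) * circleMap 0 1 θ) := by
  apply Continuous.clog
  · fun_prop
  · intro θ
    exact mem_slit _ (by simp [circleMap])

lemma key1 : (∫ θ in (0:ℝ)..(2*Real.pi),
    Real.log ‖1 - (rr:ℂ) * circleMap 0 1 θ‖) = 0 := by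
  have hi : IntervalIntegrable (fun θ : ℝ => Complex.log (1 - (rr:ℂ) * circleMap 0 1 θ))
      MeasureTheory.volume 0 (2*Real.pi) := cont_log.intervalIntegrable _ _
  have := (Complex.reCLM).intervalIntegral_comp_comm hi
  simp only [key0, map_zero] at this
  simp only [Complex.reCLM_apply, Complex.log_re] at this
  exact this

lemma myAbsSq (θ : ℝ) :
    ‖1 - (rr:ℂ) * circleMap 0 1 θ‖ ^ 2 = 1 - 2 * rr * Real.cos θ + rr ^ 2 := by
  rw [← Complex.normSq_eq_norm_sq]
  simp [Complex.normSq_apply, circleMap, Complex.mul_re, Complex.mul_im]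
  have := Real.sin_sq_add_cos_sq θ
  ring_nf
  nlinarith

lemma pointwise (θ : ℝ) :
    Real.log (1 - Real.cos θ / 2) =
      2 * Real.log ‖1 - (rr:ℂ) * circleMap 0 1 θ‖ - Real.log (4 * rr) := by
  have hz : (1 - (rr:ℂ) * circleMap 0 1 θ) ≠ 0 :=
    Complex.slitPlane_ne_zero (mem_slit _ (by simp [circleMap]))
  have habs : 0 < ‖1 - (rr:ℂ) * circleMap 0 1 θ‖ := by
    simpa [norm_pos_iff] using hz
  have h4 : (0:ℝ) < 4 * rr := by have := rr_pos; linarith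
  have hval : 1 - Real.cos θ / 2 =
      ‖1 - (rr:ℂ) * circleMap 0 1 θ‖ ^ 2 / (4 * rr) := by
    rw [myAbsSq]
    have hc := Real.cos_le_one θ
    have := rr_sq
    have hr := rr_pos.ne'
    field_simp
    nlinarith
  rw [hval, Real.log_div (pow_ne_zero _ habs.ne') (ne_of_gt h4), Real.log_pow]
  push_cast; ring

lemma int2pi : (∫ θ in (0:ℝ)..(2*Real.pi), Real.log (1 - Real.cos θ / 2)) =
    -(2 * Real.pi * Real.log (4 * rr)) := by
  have hi1 : IntervalIntegrable
      (fun θ : ℝ => 2 * Real.log ‖1 - (rr:ℂ) * circleMap 0 1 θ‖)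
      MeasureTheory.volume 0 (2*Real.pi) := by
    apply Continuous.intervalIntegrable
    apply continuous_const.mul
    apply Continuous.log
    · exact continuous_norm.comp (by fun_prop)
    · intro θ
      have : (1 - (rr:ℂ) * circleMap 0 1 θ) ≠ 0 :=
        Complex.slitPlane_ne_zero (mem_slit _ (by simp [circleMap]))
      simp only [ne_eq, norm_eq_zero]
      exact this
  have := intervalIntegral.integral_congr
    (fun θ _ => pointwise θ) (a := 0) (b := 2*Real.pi) (μ := MeasureTheory.volume)
  rw [this, intervalIntegral.integral_sub hi1 (intervalIntegrable_const),
    intervalIntegral.integral_const_mul, key1, intervalIntegral.integral_const]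
  simp [smul_eq_mul]
  try ring

theorem stmt_9 :
    Real.exp ((1/2) * ∫ t in (0:ℝ)..2, Real.log (1 - Real.cos (Real.pi * t) / 2)) =
      (2 + Real.sqrt 3) / 4 := by
  have hpi := Real.pi_pos
  have hsub : (∫ t in (0:ℝ)..2, Real.log (1 - Real.cos (Real.pi * t) / 2)) =
      Real.pi⁻¹ * ∫ θ in (Real.pi*0)..(Real.pi*2), Real.log (1 - Real.cos θ / 2) := by
    have := intervalIntegral.integral_comp_mul_left (a := 0) (b := 2)
      (fun θ => Real.log (1 - Real.cos θ / 2)) (ne_of_gt hpi)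
    simpa [smul_eq_mul] using this
  have h2pi : Real.pi * 2 = 2 * Real.pi := by ring
  rw [hsub, mul_zero, h2pi, int2pi]
  have h4 : (0:ℝ) < 4 * rr := by have := rr_pos; linarith
  have hval : (1/2 : ℝ) * (Real.pi⁻¹ * -(2 * Real.pi * Real.log (4 * rr))) =
      -Real.log (4 * rr) := by
    field_simp
  rw [hval, Real.exp_neg, Real.exp_log h4]
  rw [eq_div_iff (by norm_num), inv_mul_eq_div, div_eq_iff (ne_of_gt h4)]
  have := sqrt3_sq
  unfold rr
  nlinarith
end

section
/- For every nonzero real x, f(x) has the same sign as x; consequently, f^n(x) has the same sign as x for every n ≥ 0 and every nonzero real x. -/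
lemma f_pos {x : ℝ} (hx : 0 < x) : 0 < f x := by
  unfold f
  have h1 := Real.cos_le_one (Real.pi * x)
  have h2 := Real.neg_one_le_cos (Real.pi * x)
  nlinarith

lemma f_neg {x : ℝ} (hx : x < 0) : f x < 0 := by
  unfold f
  have h1 := Real.cos_le_one (Real.pi * x)
  have h2 := Real.neg_one_le_cos (Real.pi * x)
  rcases le_or_gt x (-(1/2)) with h | h
  · nlinarith
  · -- -1/2 < x < 0, use strict concavity of cos
    have hpi := Real.pi_pos
    have hc : 1 + 2 * x < Real.cos (Real.pi * x) := by
      have hmem0 : (0 : ℝ) ∈ Set.Icc (-(Real.pi/2)) (Real.pi/2) := by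
        constructor <;> nlinarith
      have hmem1 : (Real.pi/2) ∈ Set.Icc (-(Real.pi/2)) (Real.pi/2) := by
        constructor <;> nlinarith
      have hne : (0:ℝ) ≠ Real.pi/2 := by positivity
      have ha : (0:ℝ) < 1 + 2 * x := by linarith
      have hb : (0:ℝ) < -2 * x := by linarith
      have hab : (1 + 2*x) + (-2*x) = 1 := by ring
      have := strictConcaveOn_cos_Icc.2 hmem0 hmem1 hne ha hb hab
      simp only [smul_eq_mul, mul_zero, Real.cos_zero, Real.cos_pi_div_two,
        mul_one, add_zero, zero_add] at this
      have heq : (-2 * x) * (Real.pi/2) = Real.pi * (-x) := by ring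
      rw [heq] at this
      rw [show Real.pi * x = -(Real.pi * (-x)) by ring, Real.cos_neg]
      linarith
    nlinarith

theorem stmt_13 (x : ℝ) (hx : x ≠ 0) :
    ((0 < x → 0 < f x) ∧ (x < 0 → f x < 0)) ∧
    ∀ n : ℕ, (0 < x → 0 < f^[n] x) ∧ (x < 0 → f^[n] x < 0) := by
  refine ⟨⟨fun h => f_pos h, fun h => f_neg h⟩, ?_⟩
  intro n
  induction n with
  | zero => simpa using ⟨id, id⟩
  | succ n ih =>
    rw [Function.iterate_succ_apply']
    exact ⟨fun h => f_pos (ih.1 h), fun h => f_neg (ih.2 h)⟩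
end

section
/- Suppose S = {f^i(x)}_{i=0}^{n} is a finite orbit segment with min_{0≤i<n} |f^i(x)| ≥ M for some real M > 1/3, and write f(t) = g(t)·(t + h(t)) with g(t) = 1 - cos(πt)/2 and h(t) = (1-cos(πt))/(4-2cos(πt)). Then |(1/n)·ln(f^n(x)/x) - ln τ| < 2·(ln 3)·D*_n + (-ln(1 - 1/(3M))), where τ = (2+√3)/4 and D*_n is the star discrepancy of the sequence {f^i(x) mod 2}_{i=0}^{n-1} in [0,2]. -/
/-- The value of `x` modulo 2, in `[0,2)`. -/
noncomputable def mod2 (x : ℝ) : ℝ := x - 2 * ⌊x / 2⌋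

/-- Star discrepancy in `[0,2]` of the first `n` points `f^[i] x mod 2`. -/
noncomputable def Dstar (x : ℝ) (n : ℕ) : ℝ :=
  ⨆ c : Set.Icc (0:ℝ) 2,
    |(((Finset.range n).filter (fun i => mod2 (f^[i] x) < (c : ℝ))).card : ℝ) / n - (c : ℝ) / 2|

open Real MeasureTheory intervalIntegral Finset

namespace Sx

noncomputable def gg (t : ℝ) : ℝ := 1 - Real.cos (Real.pi * t) / 2
noncomputable def hh (t : ℝ) : ℝ :=
  (1 - Real.cos (Real.pi * t)) / (4 - 2 * Real.cos (Real.pi * t))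
noncomputable def phi (t : ℝ) : ℝ := Real.log (gg t)
noncomputable def phi' (t : ℝ) : ℝ := (Real.pi * Real.sin (Real.pi * t) / 2) / gg t

lemma gg_lb (t : ℝ) : 1/2 ≤ gg t := by
  have := Real.cos_le_one (Real.pi * t); unfold gg; linarith
lemma gg_ub (t : ℝ) : gg t ≤ 3/2 := by
  have := Real.neg_one_le_cos (Real.pi * t); unfold gg; linarith
lemma gg_pos (t : ℝ) : 0 < gg t := lt_of_lt_of_le (by norm_num) (gg_lb t)
lemma denom_lb (t : ℝ) : 2 ≤ 4 - 2 * Real.cos (Real.pi * t) := by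
  have := Real.cos_le_one (Real.pi * t); linarith
lemma hh_nonneg (t : ℝ) : 0 ≤ hh t := by
  have h1 := Real.cos_le_one (Real.pi * t)
  have h2 := denom_lb t
  exact div_nonneg (by linarith) (by linarith)
lemma hh_le (t : ℝ) : hh t ≤ 1/3 := by
  have h1 := Real.neg_one_le_cos (Real.pi * t)
  have h2 := denom_lb t
  rw [hh, div_le_iff₀ (by linarith)]; linarith
lemma f_eq (t : ℝ) : f t = gg t * (t + hh t) := by
  have h2 : (0:ℝ) < 4 - 2 * Real.cos (Real.pi * t) := lt_of_lt_of_le (by norm_num) (denom_lb t)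
  unfold f gg hh
  have key : (1 - Real.cos (Real.pi * t) / 2) * ((1 - Real.cos (Real.pi * t)) / (4 - 2 * Real.cos (Real.pi * t))) = (1 - Real.cos (Real.pi * t)) / 4 := by
    rw [mul_div_assoc', div_eq_div_iff (ne_of_gt h2) (by norm_num)]; ring
  rw [mul_add, key]; ring
lemma hh_eq_third (t : ℝ) (h : hh t = 1/3) : Real.cos (Real.pi * t) = -1 := by
  have h2 : (0:ℝ) < 4 - 2 * Real.cos (Real.pi * t) := lt_of_lt_of_le (by norm_num) (denom_lb t)
  rw [hh, div_eq_iff (ne_of_gt h2)] at h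
  linarith

lemma mod2_eq_one (t : ℝ) (h : Real.cos (Real.pi * t) = -1) : mod2 t = 1 := by
  rcases Real.cos_eq_neg_one_iff.1 h with ⟨k, hk⟩
  have hπ := Real.pi_ne_zero
  have ht : t = 2 * k + 1 := by
    have : Real.pi * (2 * k + 1) = Real.pi * t := by push_cast at hk ⊢; linarith
    exact (mul_left_cancel₀ hπ this).symm
  rw [mod2, ht]
  have : (2 * (k:ℝ) + 1) / 2 = k + 1/2 := by ring
  rw [this]
  rw [show ((k:ℝ) + 1/2) = (k:ℤ) + (1/2 : ℝ) by push_cast; ring]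
  rw [Int.floor_intCast_add]
  norm_num

lemma mod2_mem (t : ℝ) : mod2 t ∈ Set.Ico (0:ℝ) 2 := by
  constructor
  · have := Int.floor_le (t/2); rw [mod2]; linarith
  · have := Int.lt_floor_add_one (t/2); rw [mod2]; linarith

lemma gg_mod2 (t : ℝ) : gg (mod2 t) = gg t := by
  unfold gg mod2
  congr 1
  have : Real.pi * (t - 2 * ⌊t/2⌋) = Real.pi * t - (⌊t/2⌋ : ℤ) * (2 * Real.pi) := by
    push_cast; ring
  rw [this, Real.cos_sub_int_mul_two_pi]


lemma hasDerivAt_gg (t : ℝ) : HasDerivAt gg (Real.pi * Real.sin (Real.pi * t) / 2) t := by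
  have h1 : HasDerivAt (fun t : ℝ => Real.pi * t) Real.pi t := by
    simpa using (hasDerivAt_id t).const_mul Real.pi
  have h2 : HasDerivAt (fun t : ℝ => Real.cos (Real.pi * t))
      (-Real.sin (Real.pi * t) * Real.pi) t := (Real.hasDerivAt_cos _).comp t h1
  have h3 := ((h2.div_const 2).const_sub 1)
  exact h3.congr_deriv (by ring)

lemma hasDerivAt_phi (t : ℝ) : HasDerivAt phi (phi' t) t :=
  (hasDerivAt_gg t).log (ne_of_gt (gg_pos t))

lemma cont_gg : Continuous gg := by
  unfold gg; continuity

lemma cont_phi' : Continuous phi' := by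
  unfold phi'
  exact ((continuous_const.mul (Real.continuous_sin.comp (continuous_const.mul continuous_id))).div_const 2).div cont_gg (fun t => ne_of_gt (gg_pos t))

lemma cont_phi : Continuous phi := by
  unfold phi
  rw [continuous_iff_continuousAt]
  exact fun t => (Real.continuousAt_log (ne_of_gt (gg_pos t))).comp cont_gg.continuousAt

lemma ftc (a b : ℝ) : ∫ t in a..b, phi' t = phi b - phi a :=
  integral_eq_sub_of_hasDerivAt (fun t _ => hasDerivAt_phi t)
    (cont_phi'.intervalIntegrable a b)

lemma phi0 : phi 0 = Real.log (1/2) := by unfold phi gg; norm_num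
lemma phi2 : phi 2 = Real.log (1/2) := by
  unfold phi gg
  rw [show Real.pi * 2 = (1:ℤ) * (2 * Real.pi) by push_cast; ring, Real.cos_int_mul_two_pi]
  norm_num
lemma phi1 : phi 1 = Real.log (3/2) := by
  unfold phi gg; rw [mul_one, Real.cos_pi]; norm_num

lemma log3 : Real.log (3/2) - Real.log (1/2) = Real.log 3 := by
  rw [show (3:ℝ)/2 = 3 * (1/2) by norm_num, Real.log_mul (by norm_num) (by norm_num)]
  ring

lemma abs_phi'_integral : ∫ t in (0:ℝ)..2, |phi' t| = 2 * Real.log 3 := by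
  have hint : ∀ a b : ℝ, IntervalIntegrable (fun t => |phi' t|) volume a b :=
    fun a b => (cont_phi'.abs).intervalIntegrable a b
  have h01 : ∫ t in (0:ℝ)..1, |phi' t| = Real.log 3 := by
    rw [integral_congr (g := phi') ?_, ftc, phi1, phi0, log3]
    intro t ht
    rw [Set.uIcc_of_le (by norm_num)] at ht
    have hs : 0 ≤ Real.sin (Real.pi * t) :=
      Real.sin_nonneg_of_nonneg_of_le_pi (mul_nonneg Real.pi_pos.le ht.1)
        (by nlinarith [ht.2, Real.pi_pos])
    exact abs_of_nonneg (div_nonneg (by positivity) (le_of_lt (gg_pos t)))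
  have h12 : ∫ t in (1:ℝ)..2, |phi' t| = Real.log 3 := by
    rw [integral_congr (g := fun t => -phi' t) ?_]
    · rw [intervalIntegral.integral_neg, ftc, phi1, phi2]; rw [← log3]; ring
    intro t ht
    rw [Set.uIcc_of_le (by norm_num)] at ht
    have hs : Real.sin (Real.pi * t) ≤ 0 := by
      have : Real.sin (Real.pi * t - Real.pi) = -Real.sin (Real.pi * t) := Real.sin_sub_pi _
      have h2 : 0 ≤ Real.sin (Real.pi * t - Real.pi) := by
        apply Real.sin_nonneg_of_nonneg_of_le_pi
        · nlinarith [ht.1, Real.pi_pos]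
        · nlinarith [ht.2, Real.pi_pos]
      linarith
    have : phi' t ≤ 0 := div_nonpos_of_nonpos_of_nonneg (by nlinarith [Real.pi_pos]) (le_of_lt (gg_pos t))
    simpa using abs_of_nonpos this
  rw [← integral_add_adjacent_intervals (hint 0 1) (hint 1 2), h01, h12]
  ring


noncomputable def rr : ℝ := 2 - Real.sqrt 3

lemma s3 : Real.sqrt 3 * Real.sqrt 3 = 3 := Real.mul_self_sqrt (by norm_num)
lemma s3lb : 1 < Real.sqrt 3 := by nlinarith [s3, Real.sqrt_nonneg 3]
lemma s3ub : Real.sqrt 3 < 2 := by nlinarith [s3, Real.sqrt_nonneg 3]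
lemma rr_pos : 0 < rr := by unfold rr; linarith [s3ub]
lemma rr_lt_one : rr < 1 := by unfold rr; linarith [s3lb]

lemma key_identity (θ : ℝ) :
    1 - 2 * rr * Real.cos θ + rr ^ 2 = 4 * rr * (1 - Real.cos θ / 2) := by
  unfold rr; nlinarith [s3]

lemma quad_pos (θ : ℝ) : 0 < 1 - 2 * rr * Real.cos θ + rr ^ 2 := by
  rw [key_identity]
  have := Real.cos_le_one θ
  nlinarith [rr_pos]

-- pointwise series
lemma pointwise_series (θ : ℝ) :
    HasSum (fun k : ℕ => -2 * (rr ^ k / k) * Real.cos (k * θ))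
      (Real.log (1 - 2 * rr * Real.cos θ + rr ^ 2)) := by
  set z : ℂ := (rr : ℂ) * Complex.exp (θ * Complex.I) with hz
  have hnz : ‖z‖ < 1 := by
    rw [hz, norm_mul, Complex.norm_exp_ofReal_mul_I]
    simpa [abs_of_pos rr_pos] using rr_lt_one
  have h := (Complex.hasSum_taylorSeries_neg_log hnz).neg
  have hre := Complex.hasSum_re h
  have hterm : ∀ k : ℕ, (-(z ^ k / (k:ℂ))).re = -(rr ^ k / k) * Real.cos (k * θ) := by
    intro k
    have : z ^ k = ((rr ^ k : ℝ) : ℂ) * Complex.exp ((k * θ : ℝ) * Complex.I) := by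
      rw [hz, mul_pow, ← Complex.exp_nat_mul]
      push_cast
      ring_nf
    rw [this]
    have hk : ((k:ℂ)) = ((k : ℝ) : ℂ) := by push_cast; rfl
    have h2 : ((rr ^ k : ℝ) : ℂ) * Complex.exp ((k * θ : ℝ) * Complex.I) / ((k:ℝ):ℂ)
        = ((rr ^ k / k : ℝ) : ℂ) * Complex.exp ((k * θ : ℝ) * Complex.I) := by
      push_cast; ring
    rw [hk, h2, Complex.neg_re, Complex.re_ofReal_mul, Complex.exp_ofReal_mul_I_re]
    push_cast; ring
  have habs : Real.log (1 - 2 * rr * Real.cos θ + rr ^ 2)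
      = 2 * Real.log ‖1 - z‖ := by
    have hns : Complex.normSq (1 - z) = 1 - 2 * rr * Real.cos θ + rr ^ 2 := by
      have hzre : z.re = rr * Real.cos θ := by
        rw [hz, Complex.re_ofReal_mul, Complex.exp_ofReal_mul_I_re]
      have hzim : z.im = rr * Real.sin θ := by
        rw [hz, Complex.im_ofReal_mul, Complex.exp_ofReal_mul_I_im]
      rw [Complex.normSq_apply, Complex.sub_re, Complex.sub_im, hzre, hzim]
      have := Real.sin_sq_add_cos_sq θ
      simp only [Complex.one_re, Complex.one_im]
      nlinarith [this]
    rw [Complex.norm_def, Real.log_sqrt (Complex.normSq_nonneg _), hns]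
    ring
  have h2 := hre.mul_left 2
  have hval : 2 * (- -Complex.log (1 - z)).re = Real.log (1 - 2 * rr * Real.cos θ + rr ^ 2) := by
    rw [neg_neg, Complex.log_re, habs]
  rw [hval] at h2
  have hfun : (fun k : ℕ => -2 * (rr ^ k / k) * Real.cos (k * θ)) = fun i : ℕ => 2 * (-(z ^ i / (i:ℂ))).re := by
    funext k; rw [hterm k]; ring
  rw [hfun]; exact h2

noncomputable def FF (k : ℕ) (t : ℝ) : ℝ := -2 * (rr ^ k / k) * Real.cos (k * (Real.pi * t))

lemma FF_cont (k : ℕ) : Continuous (FF k) := by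
  unfold FF
  exact continuous_const.mul (Real.continuous_cos.comp (continuous_const.mul (continuous_const.mul continuous_id)))

lemma FF_bound (k : ℕ) (t : ℝ) : ‖FF k t‖ ≤ 2 * rr ^ k := by
  rcases k with _ | m
  · simp [FF]
  · have hk : (1:ℝ) ≤ (m+1 : ℕ) := by exact_mod_cast Nat.one_le_iff_ne_zero.2 (Nat.succ_ne_zero m)
    have hr : (0:ℝ) < rr ^ (m+1) := pow_pos rr_pos _
    have hcos := abs_cos_le_one ((m+1 : ℕ) * (Real.pi * t))
    rw [FF, Real.norm_eq_abs, abs_mul, abs_mul]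
    have h1 : |(-2 : ℝ)| = 2 := by norm_num
    have h2 : |rr ^ (m+1 : ℕ) / ((m+1 : ℕ) : ℝ)| ≤ rr ^ (m+1 : ℕ) := by
      rw [abs_of_pos (by positivity)]
      rw [div_le_iff₀ (by positivity)]
      nlinarith
    calc |(-2:ℝ)| * |rr ^ (m+1:ℕ) / ((m+1:ℕ):ℝ)| * |Real.cos _|
        ≤ 2 * (rr ^ (m+1:ℕ)) * 1 := by
          rw [h1]; apply mul_le_mul (by nlinarith) hcos (abs_nonneg _) (by positivity)
      _ = 2 * rr ^ (m+1:ℕ) := by ring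

lemma FF_integral_zero (k : ℕ) : ∫ t in (0:ℝ)..2, FF k t = 0 := by
  rcases k with _ | m
  · simp [FF]
  · set c : ℝ := ((m+1 : ℕ) : ℝ) * Real.pi with hc
    have hcpos : 0 < c := by positivity
    have hanti : ∀ t : ℝ, HasDerivAt (fun s => Real.sin (c * s) / c) (Real.cos (c * t)) t := by
      intro t
      have h1 : HasDerivAt (fun s : ℝ => c * s) c t := by simpa using (hasDerivAt_id t).const_mul c
      have h2 := (Real.hasDerivAt_sin (c * t)).comp t h1
      have h3 := h2.div_const c
      exact h3.congr_deriv (mul_div_cancel_right₀ _ (ne_of_gt hcpos))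
    have hint : ∫ t in (0:ℝ)..2, Real.cos (c * t)
        = Real.sin (c * 2) / c - Real.sin (c * 0) / c :=
      integral_eq_sub_of_hasDerivAt (fun t _ => hanti t)
        ((Real.continuous_cos.comp (continuous_const.mul continuous_id)).intervalIntegrable _ _)
    have hsin : Real.sin (c * 2) = 0 := by
      rw [hc, show ((m+1:ℕ):ℝ) * Real.pi * 2 = ((2*(m+1) : ℕ) : ℤ) * Real.pi by push_cast; ring]
      exact Real.sin_int_mul_pi _
    have : ∫ t in (0:ℝ)..2, FF (m+1) t
        = -2 * (rr ^ (m+1) / ((m+1:ℕ):ℝ)) * ∫ t in (0:ℝ)..2, Real.cos (c * t) := by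
      rw [← intervalIntegral.integral_const_mul]
      apply intervalIntegral.integral_congr
      intro t _
      show FF (m+1) t = _
      rw [FF, hc]
      norm_num [mul_assoc]
    rw [this, hint, hsin]
    simp

lemma K_zero : ∫ t in (0:ℝ)..2, Real.log (1 - 2*rr*Real.cos (Real.pi*t) + rr^2) = 0 := by
  have hμ : (volume (Set.Ioc (0:ℝ) 2)).toReal = 2 := by
    rw [Real.volume_Ioc]; norm_num
  have hFint : ∀ k, Integrable (FF k) (volume.restrict (Set.Ioc (0:ℝ) 2)) :=
    fun k => (FF_cont k).integrableOn_Ioc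
  have hnormint : ∀ k, ∫ t in Set.Ioc (0:ℝ) 2, ‖FF k t‖ ≤ 4 * rr ^ k := by
    intro k
    calc ∫ t in Set.Ioc (0:ℝ) 2, ‖FF k t‖
        ≤ ∫ _t in Set.Ioc (0:ℝ) 2, 2 * rr ^ k := by
          apply setIntegral_mono_on ((hFint k).norm) (integrableOn_const (by simp) enorm_ne_top)
            measurableSet_Ioc
          intro t _
          exact FF_bound k t
      _ = 2 * (2 * rr ^ k) := by rw [setIntegral_const, smul_eq_mul, Real.volume_real_Ioc_of_le (by norm_num : (0:ℝ) ≤ 2), sub_zero]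
      _ ≤ 4 * rr ^ k := by ring_nf; exact le_refl _
  have hsum : Summable fun k => ∫ t in Set.Ioc (0:ℝ) 2, ‖FF k t‖ := by
    apply Summable.of_nonneg_of_le (fun k => integral_nonneg (fun t => norm_nonneg _))
      hnormint
    exact (summable_geometric_of_lt_one rr_pos.le rr_lt_one).mul_left 4
  have hexch := integral_tsum_of_summable_integral_norm hFint hsum
  have hpt : ∀ t : ℝ, ∑' k, FF k t = Real.log (1 - 2*rr*Real.cos (Real.pi*t) + rr^2) :=
    fun t => (pointwise_series (Real.pi * t)).tsum_eq
  have hL : ∑' k, ∫ t in Set.Ioc (0:ℝ) 2, FF k t = 0 := by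
    have : ∀ k, ∫ t in Set.Ioc (0:ℝ) 2, FF k t = 0 := by
      intro k
      have := FF_integral_zero k
      rwa [intervalIntegral.integral_of_le (by norm_num : (0:ℝ) ≤ 2)] at this
    simp [this]
  rw [intervalIntegral.integral_of_le (by norm_num : (0:ℝ) ≤ 2)]
  calc ∫ t in Set.Ioc (0:ℝ) 2, Real.log (1 - 2*rr*Real.cos (Real.pi*t) + rr^2)
      = ∫ t in Set.Ioc (0:ℝ) 2, ∑' k, FF k t := by
        apply setIntegral_congr_fun measurableSet_Ioc
        intro t _
        exact (hpt t).symm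
    _ = ∑' k, ∫ t in Set.Ioc (0:ℝ) 2, FF k t := hexch.symm
    _ = 0 := hL

lemma gg_rr (t : ℝ) : 1 - 2*rr*Real.cos (Real.pi*t) + rr^2 = 4 * rr * gg t := by
  rw [key_identity]; rfl

lemma E1 : ∫ t in (0:ℝ)..2, phi t = 2 * Real.log ((2 + Real.sqrt 3)/4) := by
  have h4r : (0:ℝ) < 4 * rr := by linarith [rr_pos]
  have hlog : ∀ t : ℝ, Real.log (1 - 2*rr*Real.cos (Real.pi*t) + rr^2)
      = Real.log (4*rr) + phi t := by
    intro t
    rw [gg_rr, Real.log_mul (ne_of_gt h4r) (ne_of_gt (gg_pos t))]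
    rfl
  have hsplit : ∫ t in (0:ℝ)..2, Real.log (1 - 2*rr*Real.cos (Real.pi*t) + rr^2)
      = (∫ _t in (0:ℝ)..2, Real.log (4*rr)) + ∫ t in (0:ℝ)..2, phi t := by
    rw [← intervalIntegral.integral_add (intervalIntegrable_const)]
    · apply intervalIntegral.integral_congr
      intro t _
      exact hlog t
    · -- IntervalIntegrable phi
      have cont_phi : Continuous phi := by
        rw [continuous_iff_continuousAt]
        exact fun t => (Real.continuousAt_log (ne_of_gt (gg_pos t))).comp
          (by unfold gg; fun_prop : Continuous gg).continuousAt
      exact cont_phi.intervalIntegrable _ _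
  have hK := K_zero
  rw [hsplit] at hK
  rw [intervalIntegral.integral_const, smul_eq_mul] at hK
  have hconst : Real.log ((2 + Real.sqrt 3)/4) = - Real.log (4*rr) := by
    have hmul : (2 + Real.sqrt 3)/4 * (4*rr) = 1 := by
      unfold rr; nlinarith [s3]
    have := Real.log_mul (x := (2 + Real.sqrt 3)/4) (y := 4*rr)
      (by positivity) (ne_of_gt h4r)
    rw [hmul, Real.log_one] at this
    linarith
  rw [hconst]
  linarith [hK]

lemma koksma (y : ℕ → ℝ) (n : ℕ) (hn : 0 < n) (hy : ∀ i < n, y i ∈ Set.Ico (0:ℝ) 2)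
    (D : ℝ)
    (hD : ∀ c ∈ Set.Icc (0:ℝ) 2,
      |(((Finset.range n).filter (fun i => y i < c)).card : ℝ)/n - c/2| ≤ D) :
    |(1/n : ℝ) * (∑ i ∈ Finset.range n, phi (y i)) - Real.log ((2+Real.sqrt 3)/4)|
      ≤ 2 * Real.log 3 * D := by
  have hn' : (0:ℝ) < n := by exact_mod_cast hn
  set Nc : ℝ → ℝ := fun t => (((Finset.range n).filter (fun i => y i < t)).card : ℝ) with hNc
  set W : ℝ → ℝ := fun t => ∑ i ∈ Finset.range n,
    Set.indicator {s : ℝ | s ≤ y i} phi' t with hW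
  -- indicator functions are interval integrable
  have hind : ∀ i, IntervalIntegrable (fun t => Set.indicator {s : ℝ | s ≤ y i} phi' t)
      volume 0 2 := by
    intro i
    rw [intervalIntegrable_iff_integrableOn_Ioc_of_le (by norm_num)]
    exact ((cont_phi'.integrableOn_Ioc).indicator measurableSet_Iic)
  have hW_int : IntervalIntegrable W volume 0 2 := by
    have hWd : W = ∑ i ∈ Finset.range n, (fun t => Set.indicator {s : ℝ | s ≤ y i} phi' t) := by
      funext t; rw [hW, Finset.sum_apply]
    rw [hWd]
    exact IntervalIntegrable.sum _ (fun i _ => hind i)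
  -- pointwise identity for W
  have hW_eq : ∀ t : ℝ, W t = ((n:ℝ) - Nc t) * phi' t := by
    intro t
    rw [hW]
    simp only [Set.indicator_apply, Set.mem_setOf_eq]
    have step1 : ∀ i, (if t ≤ y i then phi' t else 0)
        = (if t ≤ y i then (1:ℝ) else 0) * phi' t := by
      intro i; split <;> simp
    rw [Finset.sum_congr rfl (fun i _ => step1 i), ← Finset.sum_mul]
    have hcards : ((Finset.range n).filter (fun i => t ≤ y i)).card
        + ((Finset.range n).filter (fun i => y i < t)).card = n := by
      classical
      have hfe : (Finset.range n).filter (fun i => t ≤ y i)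
          = (Finset.range n).filter (fun i => ¬ (y i < t)) := by
        apply Finset.filter_congr
        intro i _
        simp [not_lt]
      rw [hfe, add_comm, Finset.card_filter_add_card_filter_not, Finset.card_range]
    have hsum : (∑ i ∈ Finset.range n, if t ≤ y i then (1:ℝ) else 0)
        = ((Finset.range n).filter (fun i => t ≤ y i)).card := by
      rw [Finset.sum_boole]
    rw [hsum, hNc]
    have : ((((Finset.range n).filter (fun i => t ≤ y i)).card : ℝ))
        = (n : ℝ) - (((Finset.range n).filter (fun i => y i < t)).card : ℝ) := by
      have hc' : ((((Finset.range n).filter (fun i => t ≤ y i)).card : ℝ))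
          + (((Finset.range n).filter (fun i => y i < t)).card : ℝ) = (n:ℝ) := by
        exact_mod_cast congrArg (Nat.cast : ℕ → ℝ) hcards
      linarith
    rw [this]
  -- sum formula
  have hsum_phi : ∑ i ∈ Finset.range n, phi (y i)
      = n * phi 0 + ∫ t in (0:ℝ)..2, W t := by
    have h1 : ∀ i ∈ Finset.range n, phi (y i)
        = phi 0 + ∫ t in (0:ℝ)..2, Set.indicator {s : ℝ | s ≤ y i} phi' t := by
      intro i hi
      have hyi := hy i (Finset.mem_range.1 hi)
      have h2 : ∫ t in (0:ℝ)..2, Set.indicator {s : ℝ | s ≤ y i} phi' t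
          = ∫ t in (0:ℝ)..(y i), phi' t :=
        intervalIntegral.integral_indicator ⟨hyi.1, hyi.2.le⟩
      rw [h2, ftc]; ring
    rw [Finset.sum_congr rfl h1, Finset.sum_add_distrib, Finset.sum_const, Finset.card_range,
      ← intervalIntegral.integral_finset_sum (fun i _ => hind i), nsmul_eq_mul]
  -- integration by parts
  have hIBP : ∫ t in (0:ℝ)..2, phi t * 1
      = phi 2 * 2 - phi 0 * 0 - ∫ t in (0:ℝ)..2, phi' t * t :=
    intervalIntegral.integral_mul_deriv_eq_deriv_mul
      (fun t _ => hasDerivAt_phi t) (fun t _ => hasDerivAt_id t)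
      (cont_phi'.intervalIntegrable _ _) intervalIntegrable_const
  have hphi_int : ∫ t in (0:ℝ)..2, phi t = 2 * phi 2 - ∫ t in (0:ℝ)..2, phi' t * t := by
    have : ∫ t in (0:ℝ)..2, phi t = ∫ t in (0:ℝ)..2, phi t * 1 := by
      apply intervalIntegral.integral_congr; intro t _; ring
    rw [this, hIBP]; ring
  -- integrability of pieces
  have htphi_int : IntervalIntegrable (fun t => phi' t * t) volume 0 2 :=
    (cont_phi'.mul continuous_id).intervalIntegrable _ _
  set G : ℝ → ℝ := fun t => (1/(n:ℝ)) * W t + (1/2) * (phi' t * t) - phi' t with hG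
  have hG_int : IntervalIntegrable G volume 0 2 := by
    apply IntervalIntegrable.sub
    · exact (hW_int.const_mul _).add (htphi_int.const_mul _)
    · exact cont_phi'.intervalIntegrable _ _
  have hG_val : ∫ t in (0:ℝ)..2, G t
      = (1/(n:ℝ)) * (∫ t in (0:ℝ)..2, W t) + (1/2) * (∫ t in (0:ℝ)..2, phi' t * t)
        - (phi 2 - phi 0) := by
    rw [hG]
    rw [intervalIntegral.integral_sub ((hW_int.const_mul _).add (htphi_int.const_mul _))
      (cont_phi'.intervalIntegrable _ _)]
    rw [intervalIntegral.integral_add (hW_int.const_mul _) (htphi_int.const_mul _)]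
    rw [intervalIntegral.integral_const_mul, intervalIntegral.integral_const_mul, ftc]
  -- error equals ∫ G
  have hE : (1/n : ℝ) * (∑ i ∈ Finset.range n, phi (y i)) - Real.log ((2+Real.sqrt 3)/4)
      = ∫ t in (0:ℝ)..2, G t := by
    rw [hG_val, hsum_phi]
    have hlogτ : Real.log ((2+Real.sqrt 3)/4)
        = phi 2 - (1/2) * ∫ t in (0:ℝ)..2, phi' t * t := by
      have := E1
      rw [hphi_int] at this
      linarith
    rw [hlogτ]
    have h02 : phi 0 = phi 2 := by rw [phi0, phi2]
    field_simp
    ring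
  -- pointwise bound for G
  have hG_bound : ∀ t ∈ Set.Icc (0:ℝ) 2, |G t| ≤ D * |phi' t| := by
    intro t ht
    have h1 : G t = (t/2 - Nc t / n) * phi' t := by
      rw [hG]
      simp only
      rw [hW_eq t]
      field_simp
      ring
    rw [h1, abs_mul]
    apply mul_le_mul_of_nonneg_right _ (abs_nonneg _)
    have := hD t ht
    rw [hNc]
    calc |t/2 - (((Finset.range n).filter (fun i => y i < t)).card : ℝ)/n|
        = |(((Finset.range n).filter (fun i => y i < t)).card : ℝ)/n - t/2| := abs_sub_comm _ _
      _ ≤ D := this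
  -- final bound
  rw [hE]
  calc |∫ t in (0:ℝ)..2, G t|
      ≤ ∫ t in (0:ℝ)..2, |G t| :=
        intervalIntegral.abs_integral_le_integral_abs (by norm_num)
    _ ≤ ∫ t in (0:ℝ)..2, D * |phi' t| := by
        apply intervalIntegral.integral_mono_on (by norm_num) hG_int.abs
          ((cont_phi'.abs.intervalIntegrable _ _).const_mul _)
        exact hG_bound
    _ = D * (2 * Real.log 3) := by
        rw [intervalIntegral.integral_const_mul, abs_phi'_integral]
    _ = 2 * Real.log 3 * D := by ring

lemma step (M t : ℝ) (hM : 1/3 < M) (ht : M ≤ |t|) :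
    t ≠ 0 ∧ f t / t = gg t * (1 + hh t / t) ∧
    1 - 1/(3*M) ≤ 1 + hh t / t ∧ 1 + hh t / t ≤ 1 + 1/(3*M) := by
  have hM0 : 0 < M := by linarith
  have ht0 : t ≠ 0 := by
    intro h; rw [h, abs_zero] at ht; linarith
  refine ⟨ht0, ?_, ?_, ?_⟩
  · rw [f_eq]; field_simp
  · have : |hh t / t| ≤ 1/(3*M) := by
      rw [abs_div, abs_of_nonneg (hh_nonneg t)]
      calc hh t / |t| ≤ (1/3) / M := by
            apply div_le_div₀ (by norm_num) (hh_le t) hM0 ht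
        _ = 1/(3*M) := by field_simp
    have := (abs_le.1 this).1; linarith
  · have : |hh t / t| ≤ 1/(3*M) := by
      rw [abs_div, abs_of_nonneg (hh_nonneg t)]
      calc hh t / |t| ≤ (1/3) / M := by
            apply div_le_div₀ (by norm_num) (hh_le t) hM0 ht
        _ = 1/(3*M) := by field_simp
    have := (abs_le.1 this).2; linarith

lemma step_eq (M t : ℝ) (hM : 1/3 < M) (ht : M ≤ |t|)
    (h : 1 + hh t / t ≤ 1 - 1/(3*M)) : Real.cos (Real.pi * t) = -1 := by
  have hM0 : 0 < M := by linarith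
  have ht0 : t ≠ 0 := by intro h'; rw [h', abs_zero] at ht; linarith
  have hdiv : hh t / t ≤ -(1/(3*M)) := by linarith
  have htneg : t < 0 := by
    rcases lt_or_gt_of_ne ht0 with h' | h'
    · exact h'
    · exfalso
      have : 0 ≤ hh t / t := div_nonneg (hh_nonneg t) h'.le
      have : (0:ℝ) < 1/(3*M) := by positivity
      linarith
  have habs : |t| = -t := abs_of_neg htneg
  rw [habs] at ht
  -- hh t / t = -(hh t / (-t))
  have h2 : hh t / t = -(hh t / (-t)) := by field_simp
  rw [h2] at hdiv
  have h3 : 1/(3*M) ≤ hh t / (-t) := by linarith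
  have h4 : (1/(3*M)) * (-t) ≤ hh t := by
    rw [le_div_iff₀ (by linarith : (0:ℝ) < -t)] at h3
    linarith
  have h5 : (1:ℝ)/3 ≤ hh t := by
    have h6 : (1/(3*M)) * M ≤ (1/(3*M)) * (-t) :=
      mul_le_mul_of_nonneg_left ht (by positivity)
    have hq : (1/(3*M)) * M = 1/3 := by
      field_simp
    linarith
  have h6 : hh t = 1/3 := le_antisymm (hh_le t) h5
  exact hh_eq_third t h6

lemma telescope (x : ℝ) (n : ℕ)
    (hpos : ∀ i < n, 0 < f (f^[i] x) / f^[i] x) (hne : ∀ i < n, f^[i] x ≠ 0) :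
    Real.log (f^[n] x / x)
      = ∑ i ∈ Finset.range n, Real.log (f (f^[i] x) / f^[i] x) := by
  induction n with
  | zero =>
    simp only [Function.iterate_zero_apply, Finset.range_zero, Finset.sum_empty]
    rcases eq_or_ne x 0 with h | h
    · rw [h]; simp
    · rw [div_self h, Real.log_one]
  | succ m ih =>
    have hx0 : x ≠ 0 := by
      have := hne 0 (Nat.succ_pos m); simpa using this
    have hm : f^[m] x ≠ 0 := hne m (Nat.lt_succ_self m)
    have h1 : f (f^[m] x) / f^[m] x ≠ 0 := ne_of_gt (hpos m (Nat.lt_succ_self m))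
    have h2 : f^[m] x / x ≠ 0 := div_ne_zero hm hx0
    have hsplit : f^[m+1] x / x = (f (f^[m] x) / f^[m] x) * (f^[m] x / x) := by
      rw [Function.iterate_succ_apply']
      field_simp
    rw [hsplit, Real.log_mul h1 h2,
      ih (fun i hi => hpos i (Nat.lt_succ_of_lt hi)) (fun i hi => hne i (Nat.lt_succ_of_lt hi)),
      Finset.sum_range_succ]
    ring

lemma s3' : Real.sqrt 3 * Real.sqrt 3 = 3 := Real.mul_self_sqrt (by norm_num)
lemma s3lb' : 1 < Real.sqrt 3 := by nlinarith [s3', Real.sqrt_nonneg 3]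

lemma dstar_bdd (x : ℝ) (n : ℕ) (hn : 0 < n) :
    BddAbove (Set.range (fun c : Set.Icc (0:ℝ) 2 =>
      |(((Finset.range n).filter (fun i => mod2 (f^[i] x) < (c : ℝ))).card : ℝ) / n
        - (c : ℝ) / 2|)) := by
  refine ⟨2, ?_⟩
  rintro v ⟨c, rfl⟩
  have hn' : (0:ℝ) < n := by exact_mod_cast hn
  have h1 : (((Finset.range n).filter (fun i => mod2 (f^[i] x) < (c : ℝ))).card : ℝ) ≤ n := by
    have := (Finset.card_filter_le (Finset.range n) (fun i => mod2 (f^[i] x) < (c : ℝ)))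
    rw [Finset.card_range] at this
    exact_mod_cast this
  have h2 : (0:ℝ) ≤ (((Finset.range n).filter (fun i => mod2 (f^[i] x) < (c : ℝ))).card : ℝ) :=
    Nat.cast_nonneg _
  have hc1 := c.2.1
  have hc2 := c.2.2
  rw [abs_le]
  constructor
  · have : (0:ℝ) ≤ (((Finset.range n).filter (fun i => mod2 (f^[i] x) < (c : ℝ))).card : ℝ)/n :=
      div_nonneg h2 hn'.le
    linarith
  · have : (((Finset.range n).filter (fun i => mod2 (f^[i] x) < (c : ℝ))).card : ℝ)/n ≤ 1 := by
      rw [div_le_one hn']; exact h1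
    linarith

end Sx

open Sx in
set_option maxHeartbeats 2000000 in
theorem stmt_18 (x : ℝ) (n : ℕ) (hn : 0 < n) (M : ℝ) (hM : 1/3 < M)
    (hmin : ∀ i < n, M ≤ |f^[i] x|) :
    |(1 / n : ℝ) * Real.log (f^[n] x / x) - Real.log ((2 + Real.sqrt 3) / 4)| <
      2 * Real.log 3 * Dstar x n - Real.log (1 - 1 / (3 * M)) := by
  have hM0 : 0 < M := by linarith
  have hn' : (0:ℝ) < n := by exact_mod_cast hn
  set a : ℝ := 1/(3*M) with ha
  have ha0 : 0 < a := by rw [ha]; positivity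
  have ha1 : a < 1 := by
    rw [ha, div_lt_one (by positivity)]; linarith
  have hstep : ∀ i < n, (f^[i] x ≠ 0)
      ∧ f (f^[i] x) / f^[i] x = gg (f^[i] x) * (1 + hh (f^[i] x) / f^[i] x)
      ∧ 1 - a ≤ 1 + hh (f^[i] x) / f^[i] x ∧ 1 + hh (f^[i] x) / f^[i] x ≤ 1 + a :=
    fun i hi => step M _ hM (hmin i hi)
  set w : ℕ → ℝ := fun i => 1 + hh (f^[i] x) / f^[i] x with hw
  have hwpos : ∀ i < n, 0 < w i := fun i hi => lt_of_lt_of_le (by linarith) (hstep i hi).2.2.1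
  have hpos : ∀ i < n, 0 < f (f^[i] x) / f^[i] x := by
    intro i hi
    rw [(hstep i hi).2.1]
    exact mul_pos (gg_pos _) (hwpos i hi)
  have hne : ∀ i < n, f^[i] x ≠ 0 := fun i hi => (hstep i hi).1
  set y : ℕ → ℝ := fun i => mod2 (f^[i] x) with hy
  set b : ℕ → ℝ := fun i => Real.log (w i) with hb
  have hterm : ∀ i < n, Real.log (f (f^[i] x) / f^[i] x) = phi (y i) + b i := by
    intro i hi
    rw [(hstep i hi).2.1, Real.log_mul (ne_of_gt (gg_pos _)) (ne_of_gt (hwpos i hi))]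
    congr 1
    show Real.log (gg (f^[i] x)) = phi (mod2 (f^[i] x))
    unfold phi; rw [gg_mod2]
  have htel := telescope x n hpos hne
  have hsum : Real.log (f^[n] x / x)
      = (∑ i ∈ Finset.range n, phi (y i)) + (∑ i ∈ Finset.range n, b i) := by
    rw [htel, ← Finset.sum_add_distrib]
    exact Finset.sum_congr rfl (fun i hi => hterm i (Finset.mem_range.1 hi))
  set S1 := ∑ i ∈ Finset.range n, phi (y i) with hS1
  set S2 := ∑ i ∈ Finset.range n, b i with hS2
  have hblow : ∀ i < n, Real.log (1 - a) ≤ b i := fun i hi =>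
    Real.log_le_log (by linarith) (hstep i hi).2.2.1
  have hbhigh : ∀ i < n, b i ≤ Real.log (1 + a) := fun i hi =>
    Real.log_le_log (hwpos i hi) (hstep i hi).2.2.2
  have hlogs : Real.log (1 + a) < -Real.log (1 - a) := by
    have h1 : Real.log (1+a) + Real.log (1-a) = Real.log ((1+a)*(1-a)) :=
      (Real.log_mul (by linarith) (by linarith)).symm
    have h2 : Real.log ((1+a)*(1-a)) < 0 := Real.log_neg (by nlinarith) (by nlinarith)
    linarith
  set L : ℝ := -Real.log (1 - a) with hL
  have hL0 : 0 < L := by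
    rw [hL, neg_pos]
    exact Real.log_neg (by linarith) (by linarith)
  have hRHS : 2 * Real.log 3 * Dstar x n - Real.log (1 - 1/(3*M))
      = 2 * Real.log 3 * Dstar x n + L := by rw [hL, ha]; ring
  rw [hRHS]
  have hLHS : (1 / n : ℝ) * Real.log (f^[n] x / x) - Real.log ((2 + Real.sqrt 3) / 4)
      = ((1/n : ℝ) * S1 - Real.log ((2 + Real.sqrt 3)/4)) + (1/n : ℝ) * S2 := by
    rw [hsum]; ring
  rw [hLHS]
  have hDbound : ∀ c ∈ Set.Icc (0:ℝ) 2,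
      |(((Finset.range n).filter (fun i => y i < c)).card : ℝ)/n - c/2| ≤ Dstar x n := by
    intro c hc
    exact le_ciSup (dstar_bdd x n hn) (⟨c, hc⟩ : Set.Icc (0:ℝ) 2)
  have hlog3 : 0 < Real.log 3 := Real.log_pos (by norm_num)
  by_cases hcase : ∀ i < n, b i ≤ Real.log (1 - a)
  · -- degenerate case
    have hally : ∀ i < n, y i = 1 := by
      intro i hi
      have h1 : w i ≤ 1 - a :=
        (Real.log_le_log_iff (hwpos i hi) (by linarith)).1 (hcase i hi)
      have hcos := step_eq M (f^[i] x) hM (hmin i hi) h1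
      exact mod2_eq_one _ hcos
    have hS1val : S1 = n * Real.log (3/2) := by
      rw [hS1, Finset.sum_congr rfl
        (fun i hi => by rw [hally i (Finset.mem_range.1 hi), phi1]),
        Finset.sum_const, Finset.card_range, nsmul_eq_mul]
    have hD12 : (1/2 : ℝ) ≤ Dstar x n := by
      have hle := hDbound 1 (by norm_num)
      have hempty : ((Finset.range n).filter (fun i => y i < (1:ℝ))) = ∅ := by
        apply Finset.filter_false_of_mem
        intro i hi
        rw [hally i (Finset.mem_range.1 hi)]
        exact lt_irrefl 1
      rw [hempty] at hle
      simp only [Finset.card_empty, Nat.cast_zero, zero_div] at hle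
      calc (1/2 : ℝ) = |(0:ℝ) - 1/2| := by
            rw [zero_sub, abs_neg, abs_of_pos (by norm_num : (0:ℝ) < 1/2)]
        _ ≤ Dstar x n := hle
    have hS2low : (n : ℝ) * Real.log (1 - a) ≤ S2 := by
      rw [hS2]
      calc (n:ℝ) * Real.log (1-a) = ∑ _i ∈ Finset.range n, Real.log (1-a) := by
            rw [Finset.sum_const, Finset.card_range, nsmul_eq_mul]
        _ ≤ _ := Finset.sum_le_sum (fun i hi => hblow i (Finset.mem_range.1 hi))
    have hS2high : S2 ≤ (n:ℝ) * Real.log (1 + a) := by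
      rw [hS2]
      calc ∑ i ∈ Finset.range n, b i
          ≤ ∑ _i ∈ Finset.range n, Real.log (1+a) :=
            Finset.sum_le_sum (fun i hi => hbhigh i (Finset.mem_range.1 hi))
        _ = (n:ℝ) * Real.log (1+a) := by
            rw [Finset.sum_const, Finset.card_range, nsmul_eq_mul]
    have hBlow : -L ≤ (1/n : ℝ) * S2 := by
      have h1 : (1/n:ℝ) * ((n:ℝ) * Real.log (1-a)) ≤ (1/n:ℝ) * S2 :=
        mul_le_mul_of_nonneg_left hS2low (by positivity)
      have h2 : (1/n:ℝ) * ((n:ℝ) * Real.log (1-a)) = Real.log (1-a) := by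
        field_simp
      rw [hL]; linarith
    have hBhigh : (1/n : ℝ) * S2 ≤ Real.log (1+a) := by
      have h1 : (1/n:ℝ) * S2 ≤ (1/n:ℝ) * ((n:ℝ) * Real.log (1+a)) :=
        mul_le_mul_of_nonneg_left hS2high (by positivity)
      have h2 : (1/n:ℝ) * ((n:ℝ) * Real.log (1+a)) = Real.log (1+a) := by
        field_simp
      linarith
    have hB : |(1/n : ℝ) * S2| ≤ L := abs_le.2 ⟨hBlow, by linarith⟩
    have hA2 : (1/n : ℝ) * S1 - Real.log ((2 + Real.sqrt 3)/4)
        = Real.log (3/2) - Real.log ((2 + Real.sqrt 3)/4) := by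
      rw [hS1val]; field_simp
    have hτpos : (0:ℝ) < (2 + Real.sqrt 3)/4 := by positivity
    have hA2pos : 0 ≤ Real.log (3/2) - Real.log ((2 + Real.sqrt 3)/4) := by
      have : Real.log ((2 + Real.sqrt 3)/4) ≤ Real.log (3/2) :=
        Real.log_le_log hτpos (by nlinarith [s3', Real.sqrt_nonneg 3])
      linarith
    have hA2lt : Real.log (3/2) - Real.log ((2 + Real.sqrt 3)/4) < Real.log 3 := by
      have hmul : Real.log 3 + Real.log ((2 + Real.sqrt 3)/4)
          = Real.log (3 * ((2 + Real.sqrt 3)/4)) :=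
        (Real.log_mul (by norm_num) (ne_of_gt hτpos)).symm
      have hlt : Real.log (3/2) < Real.log (3 * ((2 + Real.sqrt 3)/4)) := by
        apply Real.log_lt_log (by norm_num)
        nlinarith [s3lb']
      linarith
    have habs := abs_add_le ((1/n : ℝ) * S1 - Real.log ((2 + Real.sqrt 3)/4)) ((1/n : ℝ) * S2)
    have h2D : Real.log 3 ≤ 2 * Real.log 3 * Dstar x n := by
      have := mul_le_mul_of_nonneg_left hD12 (by linarith [hlog3] : (0:ℝ) ≤ 2 * Real.log 3)
      calc Real.log 3 = 2 * Real.log 3 * (1/2) := by ring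
        _ ≤ 2 * Real.log 3 * Dstar x n := this
    have habsA : |(1/n : ℝ) * S1 - Real.log ((2 + Real.sqrt 3)/4)|
        = Real.log (3/2) - Real.log ((2 + Real.sqrt 3)/4) := by
      rw [hA2]; exact abs_of_nonneg hA2pos
    calc |(1/n : ℝ) * S1 - Real.log ((2 + Real.sqrt 3)/4) + (1/n : ℝ) * S2|
        ≤ |(1/n : ℝ) * S1 - Real.log ((2 + Real.sqrt 3)/4)| + |(1/n : ℝ) * S2| := habs
      _ < 2 * Real.log 3 * Dstar x n + L := by
          rw [habsA]; linarith
  · -- generic case, use Koksma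
    push_neg at hcase
    obtain ⟨j, hj, hjb⟩ := hcase
    have hS2low : (n : ℝ) * Real.log (1 - a) < S2 := by
      rw [hS2]
      have hlt := Finset.sum_lt_sum (f := fun _ : ℕ => Real.log (1-a)) (g := b)
        (fun i hi => hblow i (Finset.mem_range.1 hi))
        ⟨j, Finset.mem_range.2 hj, hjb⟩
      calc (n:ℝ) * Real.log (1-a) = ∑ _i ∈ Finset.range n, Real.log (1-a) := by
            rw [Finset.sum_const, Finset.card_range, nsmul_eq_mul]
        _ < _ := hlt
    have hS2high : S2 ≤ (n:ℝ) * Real.log (1 + a) := by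
      rw [hS2]
      calc ∑ i ∈ Finset.range n, b i
          ≤ ∑ _i ∈ Finset.range n, Real.log (1+a) :=
            Finset.sum_le_sum (fun i hi => hbhigh i (Finset.mem_range.1 hi))
        _ = (n:ℝ) * Real.log (1+a) := by
            rw [Finset.sum_const, Finset.card_range, nsmul_eq_mul]
    have hBlow : -L < (1/n : ℝ) * S2 := by
      have h1 : (1/n:ℝ) * ((n:ℝ) * Real.log (1-a)) < (1/n:ℝ) * S2 :=
        mul_lt_mul_of_pos_left hS2low (by positivity)
      have h2 : (1/n:ℝ) * ((n:ℝ) * Real.log (1-a)) = Real.log (1-a) := by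
        field_simp
      rw [hL]; linarith
    have hBhigh : (1/n : ℝ) * S2 < L := by
      have h1 : (1/n:ℝ) * S2 ≤ (1/n:ℝ) * ((n:ℝ) * Real.log (1+a)) :=
        mul_le_mul_of_nonneg_left hS2high (by positivity)
      have h2 : (1/n:ℝ) * ((n:ℝ) * Real.log (1+a)) = Real.log (1+a) := by
        field_simp
      rw [hL]; linarith [hlogs]
    have hB : |(1/n : ℝ) * S2| < L := abs_lt.2 ⟨hBlow, hBhigh⟩
    have hA := koksma y n hn (fun i _ => mod2_mem _) (Dstar x n) hDbound
    have habs := abs_add_le ((1/n : ℝ) * S1 - Real.log ((2 + Real.sqrt 3)/4)) ((1/n : ℝ) * S2)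
    have hAx : |(1/n : ℝ) * S1 - Real.log ((2 + Real.sqrt 3)/4)| ≤ 2 * Real.log 3 * Dstar x n := hA
    linarith
end
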